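/- arXiv:0906.4003 — 15 statements merged into one kernel-verified Lean document; each statement's English description precedes it below -/
import Mathlib

section
/- Let (Ω, μ) be a probability space, let T : Ω → Ω be a measurable map preserving μ, and let f ∈ L¹(Ω, μ). Then for every n ∈ ℕ, the heavy set through time n, H_T^f(0,n) = {ω ∈ Ω : ∀ i with 0 ≤ i ≤ n, S_i(ω) ≥ i·∫_Ω f dμ}, has positive μ-measure. -/
open MeasureTheory

/-- Auxiliary maximal function: `heavyMax T φ k ω = max_{0 ≤ i ≤ k} S_i(φ)(ω)`. -/
noncomputable def heavyMax {Ω : Type*} (T : Ω → Ω) (φ : Ω → ℝ) : ℕ → Ω → ℝ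
  | 0 => fun _ => 0
  | (k+1) => fun ω => max 0 (φ ω + heavyMax T φ k (T ω))

lemma heavyMax_nonneg {Ω : Type*} (T : Ω → Ω) (φ : Ω → ℝ) (k : ℕ) (ω : Ω) :
    0 ≤ heavyMax T φ k ω := by
  cases k <;> simp [heavyMax]

lemma heavyMax_mono {Ω : Type*} (T : Ω → Ω) (φ : Ω → ℝ) (k : ℕ) :
    ∀ ω, heavyMax T φ k ω ≤ heavyMax T φ (k+1) ω := by
  induction k with
  | zero => intro ω; simpa [heavyMax] using heavyMax_nonneg T φ 1 ω
  | succ k ih =>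
      intro ω
      simp only [heavyMax]
      exact max_le_max le_rfl (add_le_add_right (ih (T ω)) _)

lemma heavyMax_le_iff {Ω : Type*} (T : Ω → Ω) (φ : Ω → ℝ) (k : ℕ) :
    ∀ ω r, heavyMax T φ k ω ≤ r ↔
      ∀ i ≤ k, ∑ j ∈ Finset.range i, φ (T^[j] ω) ≤ r := by
  induction k with
  | zero =>
      intro ω r
      simp [heavyMax, Nat.le_zero]
  | succ k ih =>
      intro ω r
      have hsum : ∀ i : ℕ, ∑ j ∈ Finset.range (i+1), φ (T^[j] ω)
          = φ ω + ∑ j ∈ Finset.range i, φ (T^[j] (T ω)) := by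
        intro i
        rw [Finset.sum_range_succ']
        simp only [Function.iterate_succ_apply, Function.iterate_zero_apply]
        ring
      simp only [heavyMax, max_le_iff]
      constructor
      · rintro ⟨hr, h⟩ i hi
        match i with
        | 0 => simpa using hr
        | (i'+1) =>
            have hi' : i' ≤ k := Nat.succ_le_succ_iff.mp hi
            have := (ih (T ω) (r - φ ω)).mp (by linarith) i' hi'
            rw [hsum i']
            linarith
      · intro h
        refine ⟨by simpa using h 0 (Nat.zero_le _), ?_⟩
        have : heavyMax T φ k (T ω) ≤ r - φ ω := by
          rw [ih (T ω) (r - φ ω)]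
          intro i hi
          have := h (i+1) (Nat.succ_le_succ hi)
          rw [hsum i] at this
          linarith
        linarith

lemma heavyMax_integrable {Ω : Type*} [MeasurableSpace Ω] {μ : Measure Ω}
    {T : Ω → Ω} (hT : MeasurePreserving T μ μ) {φ : Ω → ℝ} (hφ : Integrable φ μ)
    (k : ℕ) : Integrable (heavyMax T φ k) μ := by
  induction k with
  | zero => simpa [heavyMax] using integrable_const (0 : ℝ)
  | succ k ih =>
      have h1 : Integrable (fun ω => heavyMax T φ k (T ω)) μ :=
        (hT.integrable_comp ih.aestronglyMeasurable).mpr ih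
      have h2 : Integrable (fun ω => φ ω + heavyMax T φ k (T ω)) μ := hφ.add h1
      have h3 := h2.pos_part
      simp only [heavyMax]
      refine h3.congr (Filter.Eventually.of_forall fun ω => ?_)
      exact max_comm _ _

/-- For a measure-preserving map `T` of a probability space `(Ω, μ)` and an
integrable `f`, the heavy set through time `n` has positive measure. -/
theorem heavy_set_through_time_pos_measure
    {Ω : Type*} [MeasurableSpace Ω] (μ : Measure Ω) [IsProbabilityMeasure μ]
    (T : Ω → Ω) (hT : MeasurePreserving T μ μ)
    (f : Ω → ℝ) (hf : Integrable f μ) (n : ℕ) :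
    0 < μ {ω | ∀ i : ℕ, i ≤ n →
      (i : ℝ) * ∫ x, f x ∂μ ≤ ∑ k ∈ Finset.range i, f (T^[k] ω)} := by
  set c : ℝ := ∫ x, f x ∂μ with hc
  set φ : Ω → ℝ := fun ω => c - f ω with hφdef
  have hφint : Integrable φ μ := (integrable_const c).sub hf
  have hφ0 : ∫ x, φ x ∂μ = 0 := by
    rw [hφdef]
    rw [integral_sub (integrable_const c) hf, integral_const]
    simp [hc]
  -- partial sums of φ vs the heavy condition
  have hconv : ∀ (k : ℕ) (ω : Ω),
      (∑ j ∈ Finset.range k, φ (T^[j] ω)) = (k : ℝ) * c - ∑ j ∈ Finset.range k, f (T^[j] ω) := by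
    intro k ω
    simp [hφdef, Finset.sum_sub_distrib, mul_comm]
  have key_iff : ∀ ω, heavyMax T φ n ω ≤ 0 ↔
      ∀ i ≤ n, (i : ℝ) * c ≤ ∑ k ∈ Finset.range i, f (T^[k] ω) := by
    intro ω
    rw [heavyMax_le_iff]
    constructor
    · intro h i hi
      have := h i hi
      rw [hconv i ω] at this
      linarith
    · intro h i hi
      rw [hconv i ω]
      have := h i hi
      linarith
  rw [pos_iff_ne_zero]
  intro h0
  -- a.e. the heavy condition fails, i.e. heavyMax n > 0 a.e.
  have hae : ∀ᵐ ω ∂μ, 0 < heavyMax T φ n ω := by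
    have h1 : ∀ᵐ ω ∂μ, ¬ (∀ i ≤ n, (i : ℝ) * c ≤ ∑ k ∈ Finset.range i, f (T^[k] ω)) := by
      rw [ae_iff]
      simpa only [not_not] using h0
    filter_upwards [h1] with ω hω
    by_contra h
    exact hω ((key_iff ω).mp (not_lt.mp h))
  -- downward induction
  have step : ∀ m : ℕ, (heavyMax T φ (m+1) =ᵐ[μ] heavyMax T φ n) →
      heavyMax T φ m =ᵐ[μ] heavyMax T φ n := by
    intro m hm
    have heq : heavyMax T φ (m+1) =ᵐ[μ] fun ω => φ ω + heavyMax T φ m (T ω) := by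
      filter_upwards [hm, hae] with ω h1 h2
      have hpos : 0 < heavyMax T φ (m+1) ω := h1 ▸ h2
      simp only [heavyMax] at hpos ⊢
      rcases le_or_gt (φ ω + heavyMax T φ m (T ω)) 0 with h | h
      · rw [max_eq_left h] at hpos; linarith
      · exact max_eq_right h.le
    have hcompint : Integrable (fun ω => heavyMax T φ m (T ω)) μ :=
      (hT.integrable_comp (heavyMax_integrable hT hφint m).aestronglyMeasurable).mpr
        (heavyMax_integrable hT hφint m)
    have hint_comp : ∫ ω, heavyMax T φ m (T ω) ∂μ = ∫ ω, heavyMax T φ m ω ∂μ := by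
      have : ∫ ω, heavyMax T φ m ω ∂(Measure.map T μ) = ∫ ω, heavyMax T φ m (T ω) ∂μ :=
        integral_map hT.measurable.aemeasurable
          (by rw [hT.map_eq]; exact (heavyMax_integrable hT hφint m).aestronglyMeasurable)
      rw [← this, hT.map_eq]
    have hint_eq : ∫ ω, heavyMax T φ (m+1) ω ∂μ = ∫ ω, heavyMax T φ m ω ∂μ := by
      rw [integral_congr_ae heq, integral_add hφint hcompint, hφ0, hint_comp, zero_add]
    -- nonnegative difference with zero integral
    have hdiffint : Integrable (fun ω => heavyMax T φ (m+1) ω - heavyMax T φ m ω) μ :=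
      (heavyMax_integrable hT hφint (m+1)).sub (heavyMax_integrable hT hφint m)
    have hdiff0 : (fun ω => heavyMax T φ (m+1) ω - heavyMax T φ m ω) =ᵐ[μ] 0 := by
      rw [← integral_eq_zero_iff_of_nonneg (fun ω => sub_nonneg.mpr (heavyMax_mono T φ m ω))
        hdiffint]
      rw [integral_sub (heavyMax_integrable hT hφint (m+1)) (heavyMax_integrable hT hφint m),
        hint_eq, sub_self]
    have : heavyMax T φ m =ᵐ[μ] heavyMax T φ (m+1) := by
      filter_upwards [hdiff0] with ω hω
      have : heavyMax T φ (m+1) ω - heavyMax T φ m ω = 0 := hω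
      linarith
    exact this.trans hm
  have claim : ∀ k ≤ n, heavyMax T φ (n - k) =ᵐ[μ] heavyMax T φ n := by
    intro k
    induction k with
    | zero => intro _; simp
    | succ k ih =>
        intro hk
        have hk' : k ≤ n := Nat.le_of_succ_le hk
        have hrw : (n - k) = (n - (k+1)) + 1 := by omega
        apply step
        rw [← hrw]
        exact ih hk'
  have final := claim n le_rfl
  rw [Nat.sub_self] at final
  have : ∀ᵐ ω ∂μ, False := by
    filter_upwards [final, hae] with ω h1 h2
    simp only [heavyMax] at h1
    rw [← h1] at h2
    exact lt_irrefl 0 h2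
  have hne : (μ : Measure Ω) ≠ 0 := IsProbabilityMeasure.ne_zero μ
  rcases this.exists with ⟨ω, hω⟩
  exact hω
end

section
/- Let Ω be a compact topological space with a Borel probability measure μ, let T : Ω → Ω be a continuous map preserving μ, and let f : Ω → ℝ be an upper semicontinuous, μ-integrable function. Then there exists a point ω ∈ Ω such that for every n ∈ ℕ, S_n(ω) ≥ n·∫_Ω f dμ; that is, the heavy set H_T^f(ℕ) is nonempty. -/
open MeasureTheory

/-- Key combinatorial estimate: if every point's Birkhoff sums (for `g`) drop below `-δ`
within `N` steps, and `g ≤ B`, then all Birkhoff sums drift to `-∞` linearly. -/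
private lemma key_bound {Ω : Type*} (T : Ω → Ω) (g : Ω → ℝ) (N : ℕ) (hN : 1 ≤ N)
    (B δ : ℝ) (hB : 0 ≤ B) (hδ : 0 < δ)
    (hgB : ∀ ω, g ω ≤ B)
    (hstop : ∀ ω : Ω, ∃ k, 1 ≤ k ∧ k ≤ N ∧ ∑ i ∈ Finset.range k, g (T^[i] ω) ≤ -δ) :
    ∀ (L : ℕ) (ω : Ω), ∑ i ∈ Finset.range L, g (T^[i] ω) ≤ N * B + δ - (δ / N) * L := by
  intro L
  induction L using Nat.strong_induction_on with
  | _ L IH =>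
    intro ω
    have hNpos : (0:ℝ) < N := by exact_mod_cast hN
    by_cases hL : L < N
    · have h1 : ∑ i ∈ Finset.range L, g (T^[i] ω) ≤ L * B := by
        calc ∑ i ∈ Finset.range L, g (T^[i] ω) ≤ ∑ _i ∈ Finset.range L, B :=
              Finset.sum_le_sum fun i _ => hgB _
          _ = L * B := by simp [mul_comm]
      have hLN : (L:ℝ) ≤ N := by exact_mod_cast hL.le
      have h2 : (δ / N) * L ≤ δ := by
        rw [div_mul_eq_mul_div, div_le_iff₀ hNpos]
        nlinarith
      nlinarith
    · obtain ⟨k, hk1, hkN, hkS⟩ := hstop ω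
      have hkL : k ≤ L := hkN.trans (not_lt.mp hL)
      have hsplit : ∑ i ∈ Finset.range L, g (T^[i] ω)
          = (∑ i ∈ Finset.range k, g (T^[i] ω))
            + ∑ i ∈ Finset.range (L - k), g (T^[i] (T^[k] ω)) := by
        have hLk : L = k + (L - k) := by omega
        conv_lhs => rw [hLk, Finset.sum_range_add]
        congr 1
        refine Finset.sum_congr rfl fun i _ => ?_
        rw [Nat.add_comm, Function.iterate_add_apply]
      have hIH := IH (L - k) (by omega) (T^[k] ω)
      have hkNr : (k:ℝ) ≤ N := by exact_mod_cast hkN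
      have hcast : ((L - k : ℕ):ℝ) = (L:ℝ) - k := by
        push_cast [Nat.cast_sub hkL]; ring
      rw [hcast] at hIH
      have hdk : (δ / N) * k ≤ δ := by
        rw [div_mul_eq_mul_div, div_le_iff₀ hNpos]
        nlinarith
      rw [hsplit]
      nlinarith

/-- For a continuous measure-preserving map `T` of a compact probability
space and an upper semicontinuous integrable `f`, the heavy set `H_T^f(ℕ)` is nonempty. -/
theorem heavy_set_nat_nonempty
    {Ω : Type*} [TopologicalSpace Ω] [CompactSpace Ω] [MeasurableSpace Ω] [BorelSpace Ω]
    (μ : Measure Ω) [IsProbabilityMeasure μ]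
    (T : Ω → Ω) (hTc : Continuous T) (hT : MeasurePreserving T μ μ)
    (f : Ω → ℝ) (hf : UpperSemicontinuous f) (hfi : Integrable f μ) :
    ∃ ω : Ω, ∀ n : ℕ,
      (n : ℝ) * ∫ x, f x ∂μ ≤ ∑ i ∈ Finset.range n, f (T^[i] ω) := by
  have hΩne : Nonempty Ω := Measure.nonempty_of_neZero μ
  set a : ℝ := ∫ x, f x ∂μ with ha
  set F : ℕ → Ω → ℝ := fun n ω => ∑ i ∈ Finset.range n, f (T^[i] ω) with hF
  have hFusc : ∀ n, UpperSemicontinuous (F n) := fun n =>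
    upperSemicontinuous_sum fun i _ => UpperSemicontinuous.comp hf (hTc.iterate i)
  -- an upper bound for f
  obtain ⟨M, hM⟩ : ∃ M : ℝ, ∀ ω, f ω ≤ M := by
    have hcover : (Set.univ : Set Ω) ⊆ ⋃ m : ℕ, f ⁻¹' Set.Iio (m : ℝ) := by
      intro ω _
      obtain ⟨m, hm⟩ := exists_nat_gt (f ω)
      exact Set.mem_iUnion.2 ⟨m, hm⟩
    obtain ⟨s, hs⟩ := isCompact_univ.elim_finite_subcover _
      (fun m : ℕ => hf.isOpen_preimage (m : ℝ)) hcover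
    refine ⟨(s.sup id : ℕ), fun ω => ?_⟩
    obtain ⟨m, hms, hm⟩ := Set.mem_iUnion₂.1 (hs (Set.mem_univ ω))
    have : (m : ℝ) ≤ (s.sup id : ℕ) := by
      exact_mod_cast Finset.le_sup (f := id) hms
    exact le_trans hm.le this
  -- the nested closed sets
  set A : ℕ → Set Ω := fun n => ⋂ (k : ℕ) (_ : k ≤ n), (F k) ⁻¹' Set.Ici ((k : ℝ) * a) with hA
  have hAclosed : ∀ n, IsClosed (A n) :=
    fun n => isClosed_iInter fun k => isClosed_iInter fun _ => (hFusc k).isClosed_preimage _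
  have hAanti : ∀ {m n : ℕ}, m ≤ n → A n ⊆ A m := by
    intro m n hmn ω hω
    exact Set.mem_iInter₂.2 fun k hk => Set.mem_iInter₂.1 hω k (hk.trans hmn)
  -- integrability and integrals of the shifted summands
  set g : Ω → ℝ := fun ω => f ω - a with hg
  have hgi : Integrable g μ := hfi.sub (integrable_const a)
  have hgint : ∫ x, g x ∂μ = 0 := by
    show ∫ x, f x - a ∂μ = 0
    rw [integral_sub hfi (integrable_const a)]
    simp [ha]
  have hiter : ∀ i : ℕ, MeasurePreserving (T^[i]) μ μ := fun i => hT.iterate i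
  have hcompi : ∀ i : ℕ, Integrable (fun ω => g (T^[i] ω)) μ := by
    intro i
    have h1 : Integrable g (Measure.map (T^[i]) μ) := by rw [(hiter i).map_eq]; exact hgi
    exact h1.comp_measurable (hiter i).measurable
  have hcompint : ∀ i : ℕ, ∫ ω, g (T^[i] ω) ∂μ = 0 := by
    intro i
    rw [← integral_map (hiter i).measurable.aemeasurable
      (by rw [(hiter i).map_eq]; exact hgi.1), (hiter i).map_eq, hgint]
  -- Birkhoff sums of g
  have hFg : ∀ (n : ℕ) (ω : Ω), ∑ i ∈ Finset.range n, g (T^[i] ω) = F n ω - n * a := by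
    intro n ω
    simp [hg, hF, Finset.sum_sub_distrib]
  have hSint : ∀ L : ℕ, ∫ ω, ∑ i ∈ Finset.range L, g (T^[i] ω) ∂μ = 0 := by
    intro L
    rw [integral_finset_sum _ fun i _ => hcompi i]
    simp [hcompint]
  -- each A N is nonempty
  have hAne : ∀ N : ℕ, (A N).Nonempty := by
    intro N
    by_contra hcon
    rw [Set.not_nonempty_iff_eq_empty] at hcon
    -- every point drops below 0 within N steps
    have hdrop : ∀ ω : Ω, ∃ k, 1 ≤ k ∧ k ≤ N ∧ F k ω < (k : ℝ) * a := by
      intro ω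
      have hω : ω ∉ A N := by rw [hcon]; exact Set.notMem_empty ω
      rw [hA, Set.mem_iInter₂] at hω
      push_neg at hω
      obtain ⟨k, hkN, hk⟩ := hω
      have hk' : F k ω < (k : ℝ) * a := lt_of_not_ge hk
      refine ⟨k, ?_, hkN, hk'⟩
      rcases Nat.eq_zero_or_pos k with rfl | h
      · simp [hF] at hk'
      · exact h
    have hN : 1 ≤ N := by
      rcases Nat.eq_zero_or_pos N with rfl | h
      · obtain ⟨k, hk1, hk0, _⟩ := hdrop (Classical.arbitrary Ω); omega
      · exact h
    -- extract a uniform δ > 0 by compactness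
    set V : ℕ → Set Ω := fun m =>
      ⋃ k ∈ Finset.Icc 1 N, (F k) ⁻¹' Set.Iio ((k : ℝ) * a - 1 / (m + 1)) with hV
    have hVopen : ∀ m, IsOpen (V m) := fun m =>
      isOpen_biUnion fun k _ => (hFusc k).isOpen_preimage _
    have hVcover : (Set.univ : Set Ω) ⊆ ⋃ m : ℕ, V m := by
      intro ω _
      obtain ⟨k, hk1, hkN, hk⟩ := hdrop ω
      obtain ⟨m, hm⟩ := exists_nat_one_div_lt (K := ℝ) (sub_pos.2 hk)
      refine Set.mem_iUnion.2 ⟨m, Set.mem_iUnion₂.2 ⟨k, Finset.mem_Icc.2 ⟨hk1, hkN⟩, ?_⟩⟩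
      simp only [Set.mem_preimage, Set.mem_Iio]
      linarith
    have hVmono : ∀ {m m' : ℕ}, m ≤ m' → V m ⊆ V m' := by
      intro m m' hmm ω hω
      obtain ⟨k, hks, hk⟩ := Set.mem_iUnion₂.1 hω
      refine Set.mem_iUnion₂.2 ⟨k, hks, ?_⟩
      simp only [Set.mem_preimage, Set.mem_Iio] at hk ⊢
      have h1 : (1 : ℝ) / (m' + 1) ≤ 1 / (m + 1) := by
        have hmr : (m : ℝ) ≤ m' := by exact_mod_cast hmm
        apply one_div_le_one_div_of_le
        · positivity
        · linarith
      linarith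
    obtain ⟨s, hs⟩ := isCompact_univ.elim_finite_subcover _ hVopen hVcover
    set m₀ : ℕ := s.sup id with hm₀
    have hVall : ∀ ω : Ω, ω ∈ V m₀ := by
      intro ω
      obtain ⟨m, hms, hm⟩ := Set.mem_iUnion₂.1 (hs (Set.mem_univ ω))
      exact hVmono (Finset.le_sup (f := id) hms) hm
    set δ : ℝ := 1 / (m₀ + 1) with hδdef
    have hδpos : (0:ℝ) < δ := by positivity
    -- apply the key bound
    set B : ℝ := max (M - a) 0 with hB
    have hBnn : (0:ℝ) ≤ B := le_max_right _ _
    have hgB : ∀ ω, g ω ≤ B := fun ω =>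
      le_trans (by simp [hg]; linarith [hM ω]) (le_max_left (M - a) 0)
    have hstop : ∀ ω : Ω, ∃ k, 1 ≤ k ∧ k ≤ N ∧ ∑ i ∈ Finset.range k, g (T^[i] ω) ≤ -δ := by
      intro ω
      obtain ⟨k, hks, hk⟩ := Set.mem_iUnion₂.1 (hVall ω)
      obtain ⟨hk1, hkN⟩ := Finset.mem_Icc.1 hks
      refine ⟨k, hk1, hkN, ?_⟩
      rw [hFg]
      simp only [Set.mem_preimage, Set.mem_Iio] at hk
      linarith
    have hkey := key_bound T g N hN B δ hBnn hδpos hgB hstop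
    -- choose L large enough for a contradiction
    obtain ⟨L, hL⟩ := exists_nat_gt ((N * B + δ) / (δ / N))
    have hNpos : (0:ℝ) < N := by exact_mod_cast hN
    have hδN : (0:ℝ) < δ / N := by positivity
    have hbound : N * B + δ - (δ / N) * L < 0 := by
      rw [div_lt_iff₀ hδN] at hL
      nlinarith
    have hle : (0:ℝ) ≤ N * B + δ - (δ / N) * L := by
      have hint : ∫ ω, ∑ i ∈ Finset.range L, g (T^[i] ω) ∂μ
          ≤ ∫ _ω, N * B + δ - (δ / N) * L ∂μ :=
        integral_mono (integrable_finset_sum _ fun i _ => hcompi i)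
          (integrable_const _) (fun ω => hkey L ω)
      rw [hSint L, integral_const] at hint
      simpa using hint
    linarith
  -- Cantor intersection
  obtain ⟨ω, hω⟩ := IsCompact.nonempty_iInter_of_directed_nonempty_isCompact_isClosed A
    (fun m n => ⟨max m n, hAanti (le_max_left m n), hAanti (le_max_right m n)⟩)
    hAne (fun n => (hAclosed n).isCompact) hAclosed
  refine ⟨ω, fun n => ?_⟩
  have := Set.mem_iInter₂.1 (Set.mem_iInter.1 hω n) n le_rfl
  exact this
end

section
/- (Reversing Principle) Let α ∈ ℝ and let a_0, a_1, …, a_n be real numbers such that the word a_0 … a_{n-1} is α-heavy (i.e. for every i with 1 ≤ i ≤ n, (1/i)∑_{j=0}^{i-1} a_j ≥ α) and such that (1/(n+1))∑_{j=0}^{n} a_j ≤ α. Then the transposed word a_n a_{n-1} … a_0 is α-light: for every i with 1 ≤ i ≤ n+1, (1/i)∑_{j=0}^{i-1} a_{n-j} ≤ α. -/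
/-- **Reversing Principle.** If `a₀ … a_{n-1}` is `α`-heavy but the full word
`a₀ … a_n` has average weight `≤ α`, then the transposed word `a_n a_{n-1} … a₀` is
`α`-light. -/
theorem reversing_principle (α : ℝ) (n : ℕ) (a : ℕ → ℝ)
    (hheavy : ∀ i : ℕ, 1 ≤ i → i ≤ n → α ≤ (∑ j ∈ Finset.range i, a j) / i)
    (hlight : (∑ j ∈ Finset.range (n + 1), a j) / (n + 1) ≤ α) :
    ∀ i : ℕ, 1 ≤ i → i ≤ n + 1 → (∑ j ∈ Finset.range i, a (n - j)) / i ≤ α := by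
  intro i hi1 hin
  have key : (∑ j ∈ Finset.range i, a (n - j)) =
      (∑ j ∈ Finset.range (n + 1), a j) - (∑ j ∈ Finset.range (n + 1 - i), a j) := by
    have h1 : (∑ j ∈ Finset.range i, a (n - j)) =
        ∑ j ∈ Finset.range i, a (n + 1 - i + j) := by
      rw [← Finset.sum_range_reflect (fun j => a (n + 1 - i + j)) i]
      apply Finset.sum_congr rfl
      intro j hj
      simp only [Finset.mem_range] at hj
      congr 1
      omega
    rw [h1, eq_sub_iff_add_eq]
    have h2 : ∑ j ∈ Finset.range i, a (n + 1 - i + j) =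
        ∑ j ∈ Finset.Ico (n + 1 - i) (n + 1), a j := by
      rw [Finset.sum_Ico_eq_sum_range]
      apply Finset.sum_congr (by congr 1; omega) fun j _ => rfl
    rw [h2, add_comm, Finset.sum_range_add_sum_Ico a (by omega)]
  have hip : (0:ℝ) < i := by exact_mod_cast hi1
  rw [div_le_iff₀ hip, key]
  have hS : (∑ j ∈ Finset.range (n + 1), a j) ≤ α * (n + 1) := by
    rw [div_le_iff₀ (by positivity)] at hlight
    linarith
  have hT : α * (n + 1 - i : ℕ) ≤ (∑ j ∈ Finset.range (n + 1 - i), a j) := by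
    rcases Nat.eq_zero_or_pos (n + 1 - i) with h | h
    · simp [h]
    · have := hheavy (n + 1 - i) h (by omega)
      rw [le_div_iff₀ (by exact_mod_cast h)] at this
      linarith
  have hcast : ((n + 1 - i : ℕ) : ℝ) = (n + 1 : ℝ) - i := by
    rw [Nat.cast_sub (by omega : i ≤ n + 1)]; push_cast; ring
  rw [hcast] at hT
  nlinarith
end

section
/- Let X : ℕ → ℝ be a sequence and α ∈ ℝ with liminf_{n→∞} (1/n)∑_{i=0}^{n-1} X(i) = α. Then for every δ < α there exists N ∈ ℕ such that the shifted sequence X(N), X(N+1), X(N+2), … is δ-heavy: for every m ≥ 1, (1/m)∑_{i=0}^{m-1} X(N+i) ≥ δ. -/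
/-- If the averages of a real sequence `X` have `liminf` equal to `α`
(in the extended reals), then for every `δ < α` some tail shift of `X` is `δ`-heavy. -/
theorem exists_delta_heavy_tail (X : ℕ → ℝ) (α : ℝ)
    (h : Filter.atTop.liminf
        (fun n : ℕ => (((∑ i ∈ Finset.range n, X i) / n : ℝ) : EReal)) = (α : EReal)) :
    ∀ δ : ℝ, δ < α → ∃ N : ℕ, ∀ m : ℕ, 1 ≤ m →
      δ ≤ (∑ i ∈ Finset.range m, X (N + i)) / m := by
  intro δ hδ
  set S : ℕ → ℝ := fun n => ∑ i ∈ Finset.range n, X i with hS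
  set δ₁ : ℝ := (δ + α) / 2 with hδ₁def
  have hδδ₁ : δ < δ₁ := by simp [hδ₁def]; linarith
  have hδ₁α : δ₁ < α := by simp [hδ₁def]; linarith
  -- eventually S n / n > δ₁
  have hev : ∀ᶠ n : ℕ in Filter.atTop, δ₁ < S n / n := by
    have h1 : (δ₁ : EReal) < Filter.atTop.liminf
        (fun n : ℕ => ((S n / n : ℝ) : EReal)) := by
      rw [h]; exact_mod_cast hδ₁α
    have := Filter.eventually_lt_of_lt_liminf h1
    filter_upwards [this] with n hn
    exact_mod_cast hn
  set T : ℕ → ℝ := fun n => S n - δ * n with hT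
  -- T tends to atTop
  have hTtop : Filter.Tendsto T Filter.atTop Filter.atTop := by
    have hbound : ∀ᶠ n : ℕ in Filter.atTop, (δ₁ - δ) * n ≤ T n := by
      filter_upwards [hev, Filter.eventually_gt_atTop 0] with n hn hn0
      have hn0' : (0 : ℝ) < n := by exact_mod_cast hn0
      have : δ₁ * n ≤ S n := by
        rw [lt_div_iff₀ hn0'] at hn
        · nlinarith
      simp only [hT]; nlinarith
    refine Filter.tendsto_atTop_mono' _ hbound ?_
    exact Filter.Tendsto.const_mul_atTop (by linarith) <|
      tendsto_natCast_atTop_atTop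
  -- T attains its minimum
  obtain ⟨N, hN⟩ : ∃ N, ∀ n, T N ≤ T n := by
    have := (Nat.cofinite_eq_atTop ▸ hTtop : Filter.Tendsto T Filter.cofinite Filter.atTop)
    exact this.exists_forall_le
  refine ⟨N, fun m hm => ?_⟩
  have hkey : S (N + m) - S N = ∑ i ∈ Finset.range m, X (N + i) := by
    simp [hS, Finset.sum_range_add]
  have hTN := hN (N + m)
  have hm0 : (0 : ℝ) < m := by exact_mod_cast hm
  rw [le_div_iff₀ hm0]
  have : δ * (N + m) - δ * N = δ * m := by ring
  simp only [hT, hS] at hTN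
  push_cast at hTN ⊢
  nlinarith [hkey]
end

section
/- Let s ⊆ ℝ be nonempty and well-ordered by ≥ (s contains no infinite strictly increasing sequence), and let X : ℕ → ℝ be a sequence taking values in s, with upper Banach density d_B*(X) (taken in the extended reals). Then X contains arbitrarily long d_B*(X)-heavy factors: for every L ∈ ℕ there exist j ∈ ℕ and n ≥ L such that for every i with 1 ≤ i ≤ n, the average (1/i)∑_{k=0}^{i-1} X(j+k), viewed as an extended real, is ≥ d_B*(X). -/
open Finset Pointwise

/-- Sums of `i` elements of a `<`-well-founded subset of `ℝ` form a `<`-well-founded set. -/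
private lemma sumset_isWF {t : Set ℝ} (ht : t.IsWF) (i : ℕ) :
    {x : ℝ | ∃ g : ℕ → ℝ, (∀ k, g k ∈ t) ∧ x = ∑ k ∈ Finset.range i, g k}.IsWF := by
  induction i with
  | zero =>
      refine Set.IsWF.mono (Set.isWF_singleton (a := (0:ℝ))) ?_
      rintro x ⟨g, hg, rfl⟩; simp
  | succ n ih =>
      refine Set.IsWF.mono (ih.add ht) ?_
      rintro x ⟨g, hg, rfl⟩
      rw [Finset.sum_range_succ]
      exact Set.add_mem_add ⟨g, hg, rfl⟩ (hg n)

/-- The upper Banach density of a sequence `X : ℕ → ℝ`, computed in the extended reals: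
`d_B*(X) = lim_{N→∞} sup { (1/(b-a)) ∑_{i=a}^{b-1} X i : a < b, b - a ≥ N }`.
Since the suprema are antitone in `N`, the limit equals the infimum over `N`. -/
noncomputable def upperBanachDensity (X : ℕ → ℝ) : EReal :=
  ⨅ N : ℕ, sSup {x : EReal | ∃ a b : ℕ, a < b ∧ N ≤ b - a ∧
    x = (((∑ i ∈ Finset.Ico a b, X i) / (b - a) : ℝ) : EReal)}

/-- If `s ⊆ ℝ` is nonempty and well-ordered by `≥`, then every sequence
with values in `s` contains arbitrarily long `d_B*(X)`-heavy factors. -/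
theorem arbitrarily_long_banach_heavy_factors (s : Set ℝ) (hne : s.Nonempty)
    (hwo : ¬ ∃ u : ℕ → ℝ, (∀ i, u i ∈ s) ∧ StrictMono u)
    (X : ℕ → ℝ) (hX : ∀ i, X i ∈ s) :
    ∀ L : ℕ, ∃ j n : ℕ, L ≤ n ∧ ∀ i : ℕ, 1 ≤ i → i ≤ n →
      upperBanachDensity X ≤ (((∑ k ∈ Finset.range i, X (j + k)) / i : ℝ) : EReal) := by
  -- `t` is the negation of `s`; it is `<`-well-founded.
  set t : Set ℝ := Neg.neg '' s with htdef
  have ht : t.IsWF := by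
    rw [Set.isWF_iff_no_descending_seq]
    intro f hf hmem
    refine hwo ⟨fun n => - f n, fun n => ?_, fun m n hmn => ?_⟩
    · obtain ⟨x, hx, hfx⟩ := hmem n
      have hfx' : -x = f n := hfx
      show - f n ∈ s
      rw [← hfx', neg_neg]; exact hx
    · simpa using hf hmn
  have htne : t.Nonempty := hne.image _
  -- an upper bound `M` for the values of `X`
  set M : ℝ := - ht.min htne with hMdef
  have hM : ∀ k, X k ≤ M := by
    intro k
    have hmem : - X k ∈ t := ⟨X k, hX k, rfl⟩
    have := ht.min_le htne hmem
    simp only [hMdef]; linarith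
  have hd_le_sup : ∀ N : ℕ, upperBanachDensity X ≤
      sSup {x : EReal | ∃ a b : ℕ, a < b ∧ N ≤ b - a ∧
        x = (((∑ i ∈ Finset.Ico a b, X i) / (b - a) : ℝ) : EReal)} := by
    intro N
    unfold upperBanachDensity
    exact iInf_le _ N
  have havg_le : ∀ a b : ℕ, a < b → ((∑ i ∈ Finset.Ico a b, X i) / ((b:ℝ) - a)) ≤ M := by
    intro a b hab
    have hba : (0:ℝ) < (b:ℝ) - a := by
      have : (a:ℝ) < b := by exact_mod_cast hab
      linarith
    rw [div_le_iff₀ hba]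
    have h1 : ∑ i ∈ Finset.Ico a b, X i ≤ ∑ i ∈ Finset.Ico a b, M :=
      Finset.sum_le_sum fun i _ => hM i
    have h2 : ∑ i ∈ Finset.Ico a b, M = ((b - a : ℕ) : ℝ) * M := by
      rw [Finset.sum_const, Nat.card_Ico]; simp [nsmul_eq_mul]
    have h3 : ((b - a : ℕ) : ℝ) = (b:ℝ) - a := by
      rw [Nat.cast_sub hab.le]
    rw [h3] at h2
    rw [mul_comm]
    linarith
  have hdM : upperBanachDensity X ≤ (M : EReal) := by
    refine (hd_le_sup 0).trans (sSup_le ?_)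
    rintro x ⟨a, b, hab, -, rfl⟩
    exact EReal.coe_le_coe_iff.mpr (havg_le a b hab)
  have hdtop : upperBanachDensity X ≠ ⊤ :=
    (lt_of_le_of_lt hdM (EReal.coe_lt_top M)).ne
  intro L
  by_cases hbot : upperBanachDensity X = ⊥
  · exact ⟨0, L, le_refl L, fun i _ _ => by rw [hbot]; exact bot_le⟩
  -- the density is a real number `c`
  obtain ⟨c, hc⟩ : ∃ c : ℝ, upperBanachDensity X = (c : EReal) :=
    ⟨(upperBanachDensity X).toReal, (EReal.coe_toReal hdtop hbot).symm⟩
  by_contra hcon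
  push_neg at hcon
  set L' : ℕ := max L 1 with hL'def
  have hL'1 : 1 ≤ L' := le_max_right _ _
  have hL'R : (1:ℝ) ≤ (L' : ℝ) := by exact_mod_cast hL'1
  have hL'pos : (0:ℝ) < (L':ℝ) := by linarith
  -- every position has a short prefix with average `< c`
  have key : ∀ j : ℕ, ∃ i, 1 ≤ i ∧ i ≤ L' ∧
      (∑ k ∈ Finset.range i, X (j + k)) < (i:ℝ) * c := by
    intro j
    obtain ⟨i, h1, h2, hlt⟩ := hcon j L' (le_max_left _ _)
    refine ⟨i, h1, h2, ?_⟩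
    rw [hc] at hlt
    have hlt' : (∑ k ∈ Finset.range i, X (j + k)) / (i:ℝ) < c := EReal.coe_lt_coe_iff.mp hlt
    have hi : (0:ℝ) < (i:ℝ) := by exact_mod_cast h1
    have := (div_lt_iff₀ hi).mp hlt'
    linarith
  -- the set of positive deficiencies is well-founded; take its minimum `δ > 0`
  set E : Set ℝ := {x : ℝ | 0 < x ∧ ∃ j i : ℕ, 1 ≤ i ∧ i ≤ L' ∧
      x = (i:ℝ) * c - ∑ k ∈ Finset.range i, X (j + k)} with hEdef
  have hEwf : E.IsWF := by
    have hsub : E ⊆ (Finset.Icc 1 L').sup (fun i =>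
        {x : ℝ | ∃ g : ℕ → ℝ, (∀ k, g k ∈ t) ∧ x = ∑ k ∈ Finset.range i, g k}
          + {(i:ℝ) * c}) := by
      rintro x ⟨-, j, i, h1, h2, rfl⟩
      rw [Finset.sup_set_eq_biUnion]
      refine Set.mem_biUnion (Finset.mem_Icc.mpr ⟨h1, h2⟩) ?_
      have hmem : (∑ k ∈ Finset.range i, (- X (j + k))) ∈
          {x : ℝ | ∃ g : ℕ → ℝ, (∀ k, g k ∈ t) ∧ x = ∑ k ∈ Finset.range i, g k} :=
        ⟨fun k => - X (j + k), fun k => ⟨X (j + k), hX _, rfl⟩, rfl⟩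
      have hadd := Set.add_mem_add hmem (Set.mem_singleton ((i:ℝ) * c))
      have heq : (∑ k ∈ Finset.range i, (- X (j + k))) + (i:ℝ) * c
          = (i:ℝ) * c - ∑ k ∈ Finset.range i, X (j + k) := by
        rw [Finset.sum_neg_distrib]; ring
      rwa [heq] at hadd
    refine Set.IsWF.mono ?_ hsub
    rw [Finset.isWF_sup]
    intro i _
    exact (sumset_isWF ht i).add Set.isWF_singleton
  have hEne : E.Nonempty := by
    obtain ⟨i, h1, h2, hlt⟩ := key 0
    exact ⟨(i:ℝ) * c - ∑ k ∈ Finset.range i, X (0 + k), ⟨by linarith, 0, i, h1, h2, rfl⟩⟩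
  set δ : ℝ := hEwf.min hEne with hδdef
  have hδpos : 0 < δ := (hEwf.min_mem hEne).1
  have key2 : ∀ j : ℕ, ∃ i, 1 ≤ i ∧ i ≤ L' ∧
      (∑ k ∈ Finset.range i, X (j + k)) ≤ (i:ℝ) * c - δ := by
    intro j
    obtain ⟨i, h1, h2, hlt⟩ := key j
    refine ⟨i, h1, h2, ?_⟩
    have hmem : ((i:ℝ) * c - ∑ k ∈ Finset.range i, X (j + k)) ∈ E :=
      ⟨by linarith, j, i, h1, h2, rfl⟩
    have := hEwf.min_le hEne hmem
    linarith
  choose I hI1 hIL hIsum using key2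
  -- the greedy block decomposition
  obtain ⟨g, hg0, hgs⟩ : ∃ g : ℕ → ℕ → ℕ, (∀ a, g a 0 = a) ∧
      ∀ a u, g a (u+1) = g a u + I (g a u) :=
    ⟨fun a u => Nat.rec a (fun _ ih => ih + I ih) u, fun a => rfl, fun a u => rfl⟩
  have hg_ge : ∀ a u, a + u ≤ g a u := by
    intro a u
    induction u with
    | zero => simp [hg0]
    | succ n ihn => rw [hgs]; have := hI1 (g a n); omega
  have hg_le : ∀ a u, g a u ≤ a + u * L' := by
    intro a u
    induction u with
    | zero => simp [hg0]
    | succ n ihn =>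
        rw [hgs]
        have h5 := hIL (g a n)
        have h6 : (n+1) * L' = n * L' + L' := by ring
        omega
  have hg_mono : ∀ a u, a ≤ g a u := fun a u => le_trans (Nat.le_add_right a u) (hg_ge a u)
  have hIco : ∀ j i : ℕ, ∑ k ∈ Finset.Ico j (j + i), X k = ∑ k ∈ Finset.range i, X (j + k) := by
    intro j i
    rw [Finset.sum_Ico_eq_sum_range]
    simp
  have hg_sum : ∀ a u, ∑ k ∈ Finset.Ico a (g a u), X k
      ≤ ((g a u : ℝ) - a) * c - u * δ := by
    intro a u
    induction u with
    | zero => simp [hg0]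
    | succ n ihn =>
        have h1 : a ≤ g a n := hg_mono a n
        have h2 : g a n ≤ g a (n+1) := by rw [hgs]; omega
        rw [← Finset.sum_Ico_consecutive _ h1 h2]
        have h3 : ∑ k ∈ Finset.Ico (g a n) (g a (n+1)), X k
            ≤ ((I (g a n) : ℝ)) * c - δ := by
          rw [hgs, hIco]
          exact hIsum (g a n)
        have h4 : ((g a (n+1) : ℝ)) = (g a n : ℝ) + (I (g a n) : ℝ) := by
          rw [hgs]; push_cast; ring
        rw [h4]
        push_cast
        linarith
  -- tail bound
  have htail : ∀ p b : ℕ, p ≤ b → ∑ k ∈ Finset.Ico p b, X k ≤ ((b:ℝ) - p) * M := by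
    intro p b hpb
    have h1 : ∑ k ∈ Finset.Ico p b, X k ≤ ∑ k ∈ Finset.Ico p b, M :=
      Finset.sum_le_sum fun i _ => hM i
    have h2 : ∑ k ∈ Finset.Ico p b, M = ((b - p : ℕ) : ℝ) * M := by
      rw [Finset.sum_const, Nat.card_Ico]; simp [nsmul_eq_mul]
    rw [Nat.cast_sub hpb] at h2
    linarith [h2.le, h2.ge]
  -- the main window bound
  set C : ℝ := δ + (L' : ℝ) * |M - c| with hCdef
  have hC0 : 0 ≤ C := by
    have h := abs_nonneg (M - c)
    nlinarith
  have main : ∀ a b : ℕ, a ≤ b →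
      ∑ k ∈ Finset.Ico a b, X k ≤ ((b:ℝ) - a) * (c - δ / L') + C := by
    intro a b hab
    have hex : ∃ u, b < g a u := ⟨b + 1 - a, by have := hg_ge a (b + 1 - a); omega⟩
    have hT'pos : Nat.find hex ≠ 0 := by
      intro h0
      have := Nat.find_spec hex
      rw [h0, hg0] at this
      omega
    obtain ⟨T, hT⟩ : ∃ T, Nat.find hex = T + 1 := ⟨Nat.find hex - 1, by omega⟩
    have h1 : g a T ≤ b := by
      have := Nat.find_min hex (by omega : T < Nat.find hex)
      omega
    have h2 : b < g a (T + 1) := by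
      have := Nat.find_spec hex
      rwa [hT] at this
    have hsplit : ∑ k ∈ Finset.Ico a b, X k
        = ∑ k ∈ Finset.Ico a (g a T), X k + ∑ k ∈ Finset.Ico (g a T) b, X k :=
      (Finset.sum_Ico_consecutive _ (hg_mono a T) h1).symm
    have hA := hg_sum a T
    have hB := htail (g a T) b h1
    have hpa : (a:ℝ) ≤ (g a T : ℝ) := by exact_mod_cast hg_mono a T
    have hpb : ((g a T : ℝ)) ≤ (b:ℝ) := by exact_mod_cast h1
    have hr : (b:ℝ) - (g a T : ℝ) ≤ (L' : ℝ) := by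
      have hn1 : b < g a T + L' := by
        have hh1 := hgs a T
        have hh2 := hIL (g a T)
        omega
      have : (b:ℝ) < (g a T : ℝ) + (L' : ℝ) := by exact_mod_cast hn1
      linarith
    have hTL : ((g a T : ℝ)) - a ≤ (T:ℝ) * (L':ℝ) := by
      have hn := hg_le a T
      have : ((g a T :ℕ):ℝ) ≤ (a:ℝ) + (T:ℝ) * (L':ℝ) := by exact_mod_cast hn
      linarith
    have e2 : ((g a T : ℝ) - a) * (δ / L') ≤ (T:ℝ) * δ := by
      calc ((g a T : ℝ) - a) * (δ / L') ≤ ((T:ℝ) * (L':ℝ)) * (δ / L') :=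
            mul_le_mul_of_nonneg_right hTL (by positivity)
        _ = (T:ℝ) * δ := by field_simp
    have e3 : ((b:ℝ) - (g a T : ℝ)) * (δ / L') ≤ δ := by
      calc ((b:ℝ) - (g a T : ℝ)) * (δ / L') ≤ (L':ℝ) * (δ / L') :=
            mul_le_mul_of_nonneg_right hr (by positivity)
        _ = δ := by field_simp
    have e4 : ((b:ℝ) - (g a T : ℝ)) * (M - c) ≤ (L':ℝ) * |M - c| := by
      have f1 : ((b:ℝ) - (g a T : ℝ)) * (M - c) ≤ ((b:ℝ) - (g a T : ℝ)) * |M - c| :=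
        mul_le_mul_of_nonneg_left (le_abs_self _) (by linarith)
      have f2 : ((b:ℝ) - (g a T : ℝ)) * |M - c| ≤ (L':ℝ) * |M - c| :=
        mul_le_mul_of_nonneg_right hr (abs_nonneg _)
      linarith
    rw [hsplit, hCdef]
    nlinarith [hA, hB, e2, e3, e4]
  -- conclude: for large windows the averages stay below `c - ε`, contradiction
  set ε : ℝ := δ / (2 * L') with hεdef
  have hεpos : 0 < ε := by positivity
  have hεδ : δ / (L':ℝ) = 2 * ε := by
    rw [hεdef]; field_simp
  obtain ⟨n₀, hn₀⟩ := exists_nat_ge (C / ε)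
  set N₀ : ℕ := max n₀ 1 with hN₀def
  have hfin : sSup {x : EReal | ∃ a b : ℕ, a < b ∧ N₀ ≤ b - a ∧
      x = (((∑ i ∈ Finset.Ico a b, X i) / (b - a) : ℝ) : EReal)} ≤ ((c - ε : ℝ) : EReal) := by
    refine sSup_le ?_
    rintro x ⟨a, b, hab, hN, rfl⟩
    refine EReal.coe_le_coe_iff.mpr ?_
    have hba : (0:ℝ) < (b:ℝ) - a := by
      have : (a:ℝ) < b := by exact_mod_cast hab
      linarith
    rw [div_le_iff₀ hba]
    have hmain := main a b hab.le
    have hnN : ((b:ℝ) - a) ≥ (n₀ : ℝ) := by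
      have hnat : n₀ ≤ b - a := le_trans (le_max_left _ _) hN
      have : ((b - a : ℕ) : ℝ) = (b:ℝ) - a := Nat.cast_sub hab.le
      have h5 : ((n₀:ℕ):ℝ) ≤ ((b - a : ℕ):ℝ) := by exact_mod_cast hnat
      linarith
    have hCn : C ≤ ((b:ℝ) - a) * ε := by
      have h6 : C / ε ≤ (b:ℝ) - a := le_trans hn₀ hnN
      calc C = (C / ε) * ε := by field_simp
        _ ≤ ((b:ℝ) - a) * ε := mul_le_mul_of_nonneg_right h6 hεpos.le
    calc ∑ i ∈ Finset.Ico a b, X i ≤ ((b:ℝ) - a) * (c - δ / L') + C := hmain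
      _ = ((b:ℝ) - a) * (c - 2 * ε) + C := by rw [hεδ]
      _ ≤ ((b:ℝ) - a) * (c - 2 * ε) + ((b:ℝ) - a) * ε := by linarith
      _ = (c - ε) * ((b:ℝ) - a) := by ring
  have hfinal : (c : EReal) ≤ ((c - ε : ℝ) : EReal) := by
    rw [← hc]
    exact (hd_le_sup N₀).trans hfin
  have : c ≤ c - ε := EReal.coe_le_coe_iff.mp hfinal
  linarith
end

section
/- Let s ⊆ ℝ be a set that is not well-ordered by ≥, i.e. there exists a strictly increasing sequence α_0 < α_1 < α_2 < … of elements of s. Then there exists a sequence X : ℕ → ℝ taking values in s (namely X(i) = α_i) such that X has no d_B*(X)-heavy factor of any positive length: for every j ∈ ℕ and every n ≥ 1 there is some i with 1 ≤ i ≤ n such that the average (1/i)∑_{k=0}^{i-1} X(j+k), viewed as an extended real, is < d_B*(X). -/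
/-- If `s ⊆ ℝ` is not well-ordered by `≥`, witnessed by a strictly
increasing sequence `α` in `s`, then there is a sequence `X` with values in `s`
(namely `X i = α i`) having no `d_B*(X)`-heavy factor of any positive length. -/
theorem no_banach_heavy_factors_of_not_well_ordered
    (s : Set ℝ) (α : ℕ → ℝ) (hα : ∀ i, α i ∈ s) (hmono : StrictMono α) :
    ∃ X : ℕ → ℝ, (∀ i, X i ∈ s) ∧
      ∀ j n : ℕ, 1 ≤ n → ∃ i : ℕ, 1 ≤ i ∧ i ≤ n ∧
        (((∑ k ∈ Finset.range i, X (j + k)) / i : ℝ) : EReal) < upperBanachDensity X := by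
  refine ⟨α, hα, ?_⟩
  intro j n hn
  refine ⟨1, le_refl 1, hn, ?_⟩
  have h1 : ((∑ k ∈ Finset.range 1, α (j + k)) / (1 : ℕ) : ℝ) = α j := by simp
  rw [h1]
  have hd : ((α (j + 1) : ℝ) : EReal) ≤ upperBanachDensity α := by
    apply le_iInf
    intro N
    set a := j + 1
    set b := j + 1 + (N + 1)
    have hmem : (((∑ i ∈ Finset.Ico a b, α i) / ((b : ℝ) - (a : ℝ)) : ℝ) : EReal) ∈
        {x : EReal | ∃ a b : ℕ, a < b ∧ N ≤ b - a ∧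
          x = (((∑ i ∈ Finset.Ico a b, α i) / (b - a) : ℝ) : EReal)} :=
      ⟨a, b, by omega, by omega, rfl⟩
    apply le_sSup_of_le hmem
    rw [EReal.coe_le_coe_iff]
    have hba : (b : ℝ) - (a : ℝ) = ((N + 1 : ℕ) : ℝ) := by push_cast [a, b]; ring
    rw [hba]
    have hpos : (0 : ℝ) < (N + 1 : ℕ) := by positivity
    rw [le_div_iff₀ hpos]
    have hsum : ((N + 1 : ℕ) : ℝ) * α a ≤ ∑ i ∈ Finset.Ico a b, α i := by
      have hcard : (Finset.Ico a b).card = N + 1 := by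
        rw [Nat.card_Ico]; omega
      calc ((N + 1 : ℕ) : ℝ) * α a = ∑ _i ∈ Finset.Ico a b, α a := by
            rw [Finset.sum_const, hcard]; push_cast; ring
        _ ≤ ∑ i ∈ Finset.Ico a b, α i := by
            apply Finset.sum_le_sum
            intro i hi
            exact hmono.monotone (Finset.mem_Ico.mp hi).1
    linarith
  calc ((α j : ℝ) : EReal) < ((α (j + 1) : ℝ) : EReal) := by
        exact_mod_cast hmono (by omega : j < j + 1)
    _ ≤ upperBanachDensity α := hd
end

section
/- Let s ⊆ ℝ be a nonempty compact set which is well-ordered by ≥ (contains no infinite strictly increasing sequence), and let X : ℕ → s. Then, with σ the shift map on sequences (σ(Y)(n) = Y(n+1)) and the product topology on ℝ^ℕ, the closure of the forward orbit {σ^n X : n ∈ ℕ} contains a sequence X' which is d_B*(X)-heavy: for every n ≥ 1, (1/n)∑_{i=0}^{n-1} X'(i) ≥ d_B*(X). -/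
/-- If a window `[a, b)` has average at least `t + δ/(b-a)`, then there is a start point
`c ∈ [a, b)` from which every partial average up to `b` is at least `t`, and moreover
`b - c` is bounded below in terms of `δ` and an upper bound `M` on the values. -/
lemma argmin_heavy (f : ℕ → ℝ) (t M δ : ℝ) (hfM : ∀ i, f i ≤ M) (a b : ℕ) (hab : a < b)
    (hδ : 0 < δ) (hsum : ((b : ℝ) - a) * t + δ ≤ ∑ i ∈ Finset.Ico a b, f i) :
    ∃ c, a ≤ c ∧ c < b ∧ δ ≤ ((b : ℝ) - c) * (M - t) ∧
      ∀ j, c < j → j ≤ b → ((j : ℝ) - c) * t ≤ ∑ i ∈ Finset.Ico c j, f i := by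
  set T : ℕ → ℝ := fun j => ∑ i ∈ Finset.Ico a j, (f i - t) with hT
  have hTval : ∀ j, a ≤ j → T j = (∑ i ∈ Finset.Ico a j, f i) - ((j : ℝ) - a) * t := by
    intro j hj
    simp [hT, Finset.sum_sub_distrib, Nat.card_Ico, nsmul_eq_mul, Nat.cast_sub hj]
  have hTa : T a = 0 := by simp [hT]
  have hTb : δ ≤ T b := by rw [hTval b hab.le]; linarith
  obtain ⟨c, hcmem, hmin⟩ := Finset.exists_min_image (Finset.Ico a b) T ⟨a, by
    simp [Finset.mem_Ico, hab]⟩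
  rw [Finset.mem_Ico] at hcmem
  obtain ⟨hac, hcb⟩ := hcmem
  have hTc0 : T c ≤ 0 := hTa ▸ hmin a (by simp [Finset.mem_Ico, hab])
  have hkey : ∀ j, c < j → j ≤ b → T c ≤ T j := by
    intro j h1 h2
    rcases lt_or_eq_of_le h2 with h | h
    · exact hmin j (Finset.mem_Ico.mpr ⟨hac.trans h1.le, h⟩)
    · subst h; linarith
  have hsplit : ∀ j, c ≤ j → ∑ i ∈ Finset.Ico c j, (f i - t) = T j - T c := by
    intro j hcj
    have := Finset.sum_Ico_consecutive (fun i => f i - t) hac hcj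
    simp only [hT]; linarith
  have hval2 : ∀ j, c ≤ j → ∑ i ∈ Finset.Ico c j, (f i - t)
      = (∑ i ∈ Finset.Ico c j, f i) - ((j : ℝ) - c) * t := by
    intro j hj
    simp [Finset.sum_sub_distrib, Nat.card_Ico, nsmul_eq_mul, Nat.cast_sub hj]
  refine ⟨c, hac, hcb, ?_, ?_⟩
  · have h1 : ∑ i ∈ Finset.Ico c b, (f i - t) ≤ ((b : ℝ) - c) * (M - t) := by
      have := Finset.sum_le_card_nsmul (Finset.Ico c b) (fun i => f i - t) (M - t)
        (fun i _ => sub_le_sub_right (hfM i) t)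
      simpa [Nat.card_Ico, nsmul_eq_mul, Nat.cast_sub hcb.le] using this
    have h2 := hsplit b hcb.le
    linarith
  · intro j h1 h2
    have h3 := hsplit j h1.le
    have h4 := hval2 j h1.le
    have h5 := hkey j h1 h2
    linarith

/-- If `s ⊆ ℝ` is nonempty, compact and well-ordered by `≥`, and `X` takes
values in `s`, then the closure of the forward shift-orbit of `X` (in the product topology
on `ℝ^ℕ`) contains a `d_B*(X)`-heavy sequence. -/
theorem orbit_closure_contains_banach_heavy_sequence
    (s : Set ℝ) (hne : s.Nonempty) (hcpt : IsCompact s)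
    (hwo : ¬ ∃ u : ℕ → ℝ, (∀ i, u i ∈ s) ∧ StrictMono u)
    (X : ℕ → ℝ) (hX : ∀ i, X i ∈ s) :
    ∃ X' ∈ closure (Set.range fun m : ℕ => fun k : ℕ => X (m + k)),
      ∀ n : ℕ, 1 ≤ n →
        upperBanachDensity X ≤ (((∑ i ∈ Finset.range n, X' i) / n : ℝ) : EReal) := by
  classical
  obtain ⟨M, hMs, hM⟩ : ∃ M ∈ s, ∀ x ∈ s, x ≤ M :=
    ⟨sSup s, hcpt.sSup_mem hne, fun x hx => le_csSup hcpt.bddAbove hx⟩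
  obtain ⟨m, hms, hm⟩ : ∃ m ∈ s, ∀ x ∈ s, m ≤ x :=
    ⟨sInf s, hcpt.sInf_mem hne, fun x hx => csInf_le hcpt.bddBelow hx⟩
  have hXM : ∀ i, X i ≤ M := fun i => hM _ (hX i)
  have hXm : ∀ i, m ≤ X i := fun i => hm _ (hX i)
  set S : ℕ → Set EReal := fun N => {x : EReal | ∃ a b : ℕ, a < b ∧ N ≤ b - a ∧
    x = (((∑ i ∈ Finset.Ico a b, X i) / (b - a) : ℝ) : EReal)} with hS
  have hdef : upperBanachDensity X = ⨅ N : ℕ, sSup (S N) := rfl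
  -- bounds on window averages
  have havg : ∀ a b : ℕ, a < b →
      m ≤ (∑ i ∈ Finset.Ico a b, X i) / ((b : ℝ) - a) ∧
      (∑ i ∈ Finset.Ico a b, X i) / ((b : ℝ) - a) ≤ M := by
    intro a b hab
    have hba : (0:ℝ) < (b:ℝ) - a := sub_pos.mpr (by exact_mod_cast hab)
    have hcard : ((Finset.Ico a b).card : ℝ) = (b:ℝ) - a := by
      rw [Nat.card_Ico, Nat.cast_sub hab.le]
    have hub : ∑ i ∈ Finset.Ico a b, X i ≤ ((b:ℝ) - a) * M := by
      have := Finset.sum_le_card_nsmul (Finset.Ico a b) X M (fun i _ => hXM i)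
      rwa [nsmul_eq_mul, hcard] at this
    have hlb : ((b:ℝ) - a) * m ≤ ∑ i ∈ Finset.Ico a b, X i := by
      have := Finset.card_nsmul_le_sum (Finset.Ico a b) X m (fun i _ => hXm i)
      rwa [nsmul_eq_mul, hcard] at this
    constructor
    · rw [le_div_iff₀ hba, mul_comm]; exact hlb
    · rw [div_le_iff₀ hba, mul_comm]; exact hub
  have hdM : upperBanachDensity X ≤ (M : EReal) := by
    refine le_trans (iInf_le _ 0) (sSup_le ?_)
    rintro x ⟨a, b, hab, -, rfl⟩
    exact EReal.coe_le_coe_iff.mpr (havg a b hab).2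
  have hdm : (m : EReal) ≤ upperBanachDensity X := by
    refine le_iInf fun N => ?_
    refine le_sSup_of_le (show _ ∈ S N from ⟨0, N+1, Nat.succ_pos N, by omega, rfl⟩) ?_
    refine EReal.coe_le_coe_iff.mpr ?_
    have := (havg 0 (N+1) (Nat.succ_pos N)).1
    convert this using 2 <;> push_cast <;> ring
  have hne_top : upperBanachDensity X ≠ ⊤ :=
    ne_top_of_le_ne_top (EReal.coe_ne_top M) hdM
  have hne_bot : upperBanachDensity X ≠ ⊥ := by
    intro h
    rw [h, le_bot_iff] at hdm
    exact EReal.coe_ne_bot m hdm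
  set d₀ := (upperBanachDensity X).toReal with hd₀
  have hcoe : (d₀ : EReal) = upperBanachDensity X := EReal.coe_toReal hne_top hne_bot
  have hd0M : d₀ ≤ M := by
    rw [← EReal.coe_le_coe_iff, hcoe]; exact hdM
  obtain ⟨K, hK1, hK⟩ : ∃ K : ℕ, 1 ≤ K ∧ M - d₀ + 2 ≤ (K:ℝ) :=
    ⟨max 1 ⌈M - d₀ + 2⌉₊, le_max_left _ _,
      le_trans (Nat.le_ceil _) (by exact_mod_cast le_max_right 1 ⌈M - d₀ + 2⌉₊)⟩
  -- choose long windows with average close to d₀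
  have hwin : ∀ k : ℕ, ∃ a b : ℕ, a < b ∧ (k+1)*(k+1)*K ≤ b - a ∧
      ((b:ℝ) - a) * (d₀ - 1/((k:ℝ)+1)) < ∑ i ∈ Finset.Ico a b, X i := by
    intro k
    have h1 : (d₀ : EReal) ≤ sSup (S ((k+1)*(k+1)*K)) := by
      rw [hcoe, hdef]; exact iInf_le _ _
    have hk1 : (0:ℝ) < (k:ℝ)+1 := by positivity
    have h2 : ((d₀ - 1/((k:ℝ)+1) : ℝ) : EReal) < sSup (S ((k+1)*(k+1)*K)) := by
      refine lt_of_lt_of_le ?_ h1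
      refine EReal.coe_lt_coe_iff.mpr ?_
      have h0 : (0:ℝ) < 1/((k:ℝ)+1) := by positivity
      linarith
    obtain ⟨x, hxmem, hxlt⟩ := lt_sSup_iff.mp h2
    obtain ⟨a, b, hab, hlen, rfl⟩ := hxmem
    refine ⟨a, b, hab, hlen, ?_⟩
    have hba : (0:ℝ) < (b:ℝ) - a := sub_pos.mpr (by exact_mod_cast hab)
    have h3 : d₀ - 1/((k:ℝ)+1) < (∑ i ∈ Finset.Ico a b, X i) / ((b:ℝ) - a) :=
      EReal.coe_lt_coe_iff.mp hxlt
    rw [lt_div_iff₀ hba] at h3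
    rw [mul_comm]; exact h3
  -- for each k, find a start point with all averages up to length k+1 at least d₀ - 2/(k+1)
  have hstep : ∀ k : ℕ, ∃ c : ℕ, ∀ j, 1 ≤ j → j ≤ k+1 →
      (j : ℝ) * (d₀ - 2/((k:ℝ)+1)) ≤ ∑ i ∈ Finset.range j, X (c + i) := by
    intro k
    obtain ⟨a, b, hab, hlen, hsum⟩ := hwin k
    have hk1 : (0:ℝ) < (k:ℝ)+1 := by positivity
    have hba : (0:ℝ) < (b:ℝ) - a := sub_pos.mpr (by exact_mod_cast hab)
    set t := d₀ - 2/((k:ℝ)+1) with ht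
    set δ := ((b:ℝ) - a)/((k:ℝ)+1) with hδdef
    have hδ : 0 < δ := div_pos hba hk1
    have hsum' : ((b:ℝ) - a) * t + δ ≤ ∑ i ∈ Finset.Ico a b, X i := by
      have heq : ((b:ℝ)-a) * (d₀ - 1/((k:ℝ)+1)) = ((b:ℝ)-a)*t + δ := by
        rw [ht, hδdef]; field_simp; ring
      rw [← heq]; exact hsum.le
    obtain ⟨c, hac, hcb, hlenc, hheavy⟩ := argmin_heavy X t M δ hXM a b hab hδ hsum'
    have hMt : M - t ≤ (K:ℝ) := by
      have h2k : 2/((k:ℝ)+1) ≤ 2 := div_le_self (by norm_num) (by linarith)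
      rw [ht]; linarith
    have hbc0 : (0:ℝ) ≤ (b:ℝ) - c := sub_nonneg.mpr (by exact_mod_cast hcb.le)
    have h3 : δ ≤ ((b:ℝ) - c) * K :=
      le_trans hlenc (mul_le_mul_of_nonneg_left hMt hbc0)
    have hlenR : ((k:ℝ)+1)*((k:ℝ)+1)*K ≤ (b:ℝ) - a := by
      have h4 : (((k+1)*(k+1)*K : ℕ) : ℝ) ≤ ((b - a : ℕ) : ℝ) := by exact_mod_cast hlen
      rw [Nat.cast_sub hab.le] at h4
      push_cast at h4
      linarith
    have hK0 : (0:ℝ) < K := by exact_mod_cast hK1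
    have hbck : ((k:ℝ)+1) ≤ (b:ℝ) - c := by
      have h4 : ((k:ℝ)+1)*K ≤ δ := by
        rw [hδdef, le_div_iff₀ hk1]; nlinarith
      nlinarith
    have hbck' : c + (k+1) ≤ b := by
      have : (c:ℝ) + ((k:ℝ)+1) ≤ (b:ℝ) := by linarith
      exact_mod_cast this
    refine ⟨c, fun j hj1 hjk => ?_⟩
    have h5 := hheavy (c+j) (by omega) (by omega)
    rw [Finset.sum_Ico_eq_sum_range] at h5
    have h6 : ((c+j : ℕ) : ℝ) - (c:ℝ) = (j:ℝ) := by push_cast; ring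
    rw [h6] at h5
    simpa [Nat.add_sub_cancel_left] using h5
  choose c hc using hstep
  set F : ℕ → (ℕ → ℝ) := fun m => fun j => X (m + j) with hF
  have hsub : Set.range F ⊆ Set.univ.pi (fun _ : ℕ => s) := by
    rintro _ ⟨m, rfl⟩ i _; exact hX _
  have hPc : IsCompact (Set.univ.pi fun _ : ℕ => s) := isCompact_univ_pi fun _ => hcpt
  have hKcc : IsCompact (closure (Set.range F)) :=
    hPc.of_isClosed_subset isClosed_closure (closure_minimal hsub hPc.isClosed)
  have hmem : ∀ k, F (c k) ∈ closure (Set.range F) := fun k => subset_closure ⟨c k, rfl⟩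
  obtain ⟨X', hX'mem, φ, hφ, hconv⟩ := hKcc.tendsto_subseq hmem
  refine ⟨X', hX'mem, ?_⟩
  intro n hn
  rw [← hcoe, EReal.coe_le_coe_iff]
  have hn0 : (0:ℝ) < n := by exact_mod_cast hn
  rw [le_div_iff₀ hn0]
  have hcont : Continuous (fun f : ℕ → ℝ => ∑ i ∈ Finset.range n, f i) :=
    continuous_finset_sum _ fun i _ => continuous_apply i
  have htend : Filter.Tendsto (fun k => ∑ i ∈ Finset.range n, F (c (φ k)) i)
      Filter.atTop (nhds (∑ i ∈ Finset.range n, X' i)) :=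
    ((hcont.tendsto X').comp hconv)
  have hdiv : Filter.Tendsto (fun k : ℕ => 2/((φ k : ℝ)+1)) Filter.atTop (nhds 0) := by
    apply Filter.Tendsto.div_atTop tendsto_const_nhds
    exact Filter.tendsto_atTop_add_const_right _ 1
      (tendsto_natCast_atTop_atTop.comp hφ.tendsto_atTop)
  have hlow : Filter.Tendsto (fun k : ℕ => (n:ℝ) * (d₀ - 2/((φ k : ℝ)+1)))
      Filter.atTop (nhds ((n:ℝ) * d₀)) := by
    have := (tendsto_const_nhds (x := d₀) (f := Filter.atTop (α := ℕ))).sub hdiv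
    simpa using (tendsto_const_nhds (x := (n:ℝ))).mul this
  have hle : ∀ᶠ k in Filter.atTop,
      (n:ℝ) * (d₀ - 2/((φ k : ℝ)+1)) ≤ ∑ i ∈ Finset.range n, F (c (φ k)) i := by
    filter_upwards [Filter.eventually_ge_atTop n] with k hk
    have hφk : n ≤ φ k + 1 := le_trans hk (le_trans hφ.le_apply (Nat.le_succ _))
    exact hc (φ k) n hn hφk
  have final : (n:ℝ) * d₀ ≤ ∑ i ∈ Finset.range n, X' i :=
    le_of_tendsto_of_tendsto hlow htend hle
  linarith [mul_comm (n:ℝ) d₀]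
end

section
/- Let A and B be nonempty finite words of real numbers, each of which is locally heavy. Then the concatenation AB is locally heavy if and only if w̄(A) ≥ w̄(B), where w̄ denotes average weight. -/
/-- A finite word of reals is locally heavy if every nonempty prefix has average weight
at least the average weight of the whole word. -/
def LocallyHeavy (A : List ℝ) : Prop :=
  ∀ i : ℕ, 1 ≤ i → i ≤ A.length → A.sum / A.length ≤ (A.take i).sum / i

/-- For nonempty locally heavy words `A` and `B`, the concatenation `A ++ B`
is locally heavy iff the average weight of `A` is at least that of `B`. -/
theorem concat_locallyHeavy_iff (A B : List ℝ) (hA : A ≠ []) (hB : B ≠ [])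
    (hAh : LocallyHeavy A) (hBh : LocallyHeavy B) :
    LocallyHeavy (A ++ B) ↔ B.sum / B.length ≤ A.sum / A.length := by
  have hm : 0 < A.length := List.length_pos_iff.mpr hA
  have hn : 0 < B.length := List.length_pos_iff.mpr hB
  have hmr : (0:ℝ) < A.length := by exact_mod_cast hm
  have hnr : (0:ℝ) < B.length := by exact_mod_cast hn
  constructor
  · intro H
    have h1 := H A.length hm (by simp [List.length_append])
    rw [List.take_left] at h1
    rw [List.sum_append, List.length_append] at h1
    push_cast at h1
    rw [div_le_div_iff₀ (by positivity) hmr] at h1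
    rw [div_le_div_iff₀ hnr hmr]
    nlinarith
  · intro hab
    rw [div_le_div_iff₀ hnr hmr] at hab
    intro i h1 hi
    rw [List.length_append] at hi
    have hir : (0:ℝ) < i := by exact_mod_cast h1
    rw [List.sum_append, List.length_append,
      List.take_append, List.sum_append]
    push_cast
    rw [div_le_div_iff₀ (by positivity) hir]
    by_cases hc : i ≤ A.length
    · have hj : i - A.length = 0 := by omega
      rw [hj]
      simp only [List.take_zero, List.sum_nil, add_zero]
      have h2 := hAh i h1 hc
      rw [div_le_div_iff₀ hmr hir] at h2
      have hic : (i:ℝ) ≤ A.length := by exact_mod_cast hc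
      nlinarith [mul_le_mul_of_nonneg_right h2 (le_of_lt hnr),
        mul_le_mul_of_nonneg_right hab hir.le]
    · push_neg at hc
      set j := i - A.length with hjdef
      have hj1 : 1 ≤ j := by omega
      have hj2 : j ≤ B.length := by omega
      have hij : (i:ℝ) = A.length + j := by
        have : i = A.length + j := by omega
        rw [this]; push_cast; ring
      have hA2 : A.take i = A := List.take_of_length_le (by omega)
      rw [hA2]
      have h2 := hBh j hj1 hj2
      rw [div_le_div_iff₀ hnr (by exact_mod_cast hj1)] at h2
      have hjn : (j:ℝ) ≤ B.length := by exact_mod_cast hj2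
      rw [hij]
      nlinarith [mul_le_mul_of_nonneg_right h2 hmr.le,
        mul_le_mul_of_nonneg_right h2 hnr.le,
        mul_nonneg (sub_nonneg.mpr hjn) (sub_nonneg.mpr hab)]
end

section
/- Let s ⊆ ℝ. Then every sequence X : ℕ → ℝ taking values in s contains arbitrarily long locally heavy factors (for every L there exist j and n ≥ L such that the word X(j) … X(j+n-1) is locally heavy) if and only if s is well-ordered by ≥ (contains no infinite strictly increasing sequence). -/
open Finset

private lemma mediant_le {A B n m : ℝ} (hn : 0 < n) (hm : 0 < m) (h : B / m ≤ A / n) :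
    (A + B) / (n + m) ≤ A / n := by
  rw [div_le_div_iff₀ (by linarith) hn]
  rw [div_le_div_iff₀ hm hn] at h
  nlinarith

private lemma concat_ineq {A B C n m t : ℝ} (hn : 0 < n) (hm : 0 < m) (ht : 0 < t)
    (htm : t ≤ m) (hAB : B / m ≤ A / n) (hC : B / m ≤ C / t) :
    (A + B) / (n + m) ≤ (A + C) / (n + t) := by
  rw [div_le_div_iff₀ (by linarith) (by linarith)]
  rw [div_le_div_iff₀ hm hn] at hAB
  rw [div_le_div_iff₀ hm ht] at hC
  nlinarith [mul_nonneg (sub_nonneg.2 htm) (sub_nonneg.2 hAB),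
    mul_nonneg hn.le (sub_nonneg.2 hC), mul_nonneg hm.le (sub_nonneg.2 hC)]

private def LocHeavy (X : ℕ → ℝ) (j n : ℕ) : Prop :=
  ∀ i : ℕ, 1 ≤ i → i ≤ n →
    (∑ k ∈ Finset.range n, X (j + k)) / n ≤ (∑ k ∈ Finset.range i, X (j + k)) / i

private lemma locHeavy_one (X : ℕ → ℝ) (j : ℕ) : LocHeavy X j 1 := by
  intro i h1 h2
  have : i = 1 := le_antisymm h2 h1
  subst this
  exact le_rfl

private lemma sum_split (X : ℕ → ℝ) (j n m : ℕ) :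
    ∑ k ∈ Finset.range (n + m), X (j + k)
      = (∑ k ∈ Finset.range n, X (j + k)) + ∑ k ∈ Finset.range m, X (j + n + k) := by
  rw [Finset.sum_range_add]
  congr 1
  refine Finset.sum_congr rfl fun k _ => ?_
  ring_nf

private lemma locHeavy_concat {X : ℕ → ℝ} {j n m : ℕ} (hn : 1 ≤ n) (hm : 1 ≤ m)
    (hA : LocHeavy X j n) (hB : LocHeavy X (j + n) m)
    (hav : (∑ k ∈ Finset.range m, X (j + n + k)) / m ≤ (∑ k ∈ Finset.range n, X (j + k)) / n) :
    LocHeavy X j (n + m) := by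
  have hn0 : (0:ℝ) < n := by exact_mod_cast hn
  have hm0 : (0:ℝ) < m := by exact_mod_cast hm
  intro i h1 hle
  rw [sum_split X j n m]
  rcases le_or_gt i n with h | h
  · refine le_trans ?_ (hA i h1 h)
    push_cast
    exact mediant_le hn0 hm0 hav
  · obtain ⟨t, rfl⟩ : ∃ t, i = n + t := ⟨i - n, by omega⟩
    have ht1 : 1 ≤ t := by omega
    have htm : t ≤ m := by omega
    have ht0 : (0:ℝ) < t := by exact_mod_cast ht1
    rw [sum_split X j n t]
    push_cast
    exact concat_ineq hn0 hm0 ht0 (by exact_mod_cast htm) hav (hB t ht1 htm)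

private lemma aux_anti (s : Set ℝ) (hs : ¬ ∃ u : ℕ → ℝ, (∀ i, u i ∈ s) ∧ StrictMono u)
    (v : ℕ → ℝ) (hv : ∀ k, v k ∈ s) :
    ∃ g : ℕ → ℕ, StrictMono g ∧ ∀ a b, a ≤ b → v (g b) ≤ v (g a) := by
  have hpwo : s.PartiallyWellOrderedOn (· ≥ ·) := by
    refine Set.partiallyWellOrderedOn_iff_exists_lt.2 fun f hf => ?_
    by_contra hcon
    push_neg at hcon
    exact hs ⟨f, hf, fun a b hab => hcon a b hab⟩
  obtain ⟨g, hg⟩ := hpwo.exists_monotone_subseq (f := v) hv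
  exact ⟨g, g.strictMono, fun a b hab => hg a b hab⟩

private lemma aux_sum (s : Set ℝ) (hs : ¬ ∃ u : ℕ → ℝ, (∀ i, u i ∈ s) ∧ StrictMono u) :
    ∀ m : ℕ, ∀ c : ℕ → ℕ → ℝ, (∀ k i, i < m → c k i ∈ s) →
      ¬ StrictMono (fun k => ∑ i ∈ Finset.range m, c k i) := by
  intro m
  induction m with
  | zero =>
    intro c _ h
    simpa using h (show (0:ℕ) < 1 by norm_num)
  | succ m ih =>
    intro c hc hsm
    obtain ⟨g, hg, hanti⟩ := aux_anti s hs (fun k => c k m) (fun k => hc k m (by omega))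
    refine ih (fun k i => c (g k) i) (fun k i hi => hc (g k) i (by omega)) ?_
    intro a b hab
    have h1 := hsm (hg hab)
    have h2 := hanti a b hab.le
    simp only [Finset.sum_range_succ] at h1
    simp only []
    linarith

/-- Every sequence with values in `s ⊆ ℝ` contains arbitrarily long
locally heavy factors iff `s` is well-ordered by `≥` (has no infinite strictly increasing
sequence). -/
theorem arbitrarily_long_locally_heavy_iff_well_ordered (s : Set ℝ) :
    (∀ X : ℕ → ℝ, (∀ i, X i ∈ s) → ∀ L : ℕ, ∃ j n : ℕ, L ≤ n ∧ 1 ≤ n ∧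
        ∀ i : ℕ, 1 ≤ i → i ≤ n →
          (∑ k ∈ Finset.range n, X (j + k)) / n ≤ (∑ k ∈ Finset.range i, X (j + k)) / i)
      ↔ ¬ ∃ u : ℕ → ℝ, (∀ i, u i ∈ s) ∧ StrictMono u := by
  classical
  constructor
  · rintro h ⟨u, hu, hmono⟩
    obtain ⟨j, n, hLn, h1n, hLH⟩ := h u hu 2
    have h1 := hLH 1 le_rfl (le_trans one_le_two hLn)
    have e1 : (∑ k ∈ Finset.range 1, u (j + k)) / ((1:ℕ):ℝ) = u j := by simp
    rw [e1] at h1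
    have hn0 : (0:ℝ) < n := by exact_mod_cast h1n
    have hsum : ∑ k ∈ Finset.range n, u j < ∑ k ∈ Finset.range n, u (j + k) := by
      refine Finset.sum_lt_sum (fun k _ => hmono.monotone (Nat.le_add_right j k)) ?_
      exact ⟨1, Finset.mem_range.2 (by omega), hmono (by omega)⟩
    have hlt : (n:ℝ) * u j < ∑ k ∈ Finset.range n, u (j + k) := by
      simpa [Finset.sum_const, nsmul_eq_mul] using hsum
    rw [div_le_iff₀ hn0] at h1
    linarith
  · intro hwo X hX L
    by_contra hcon
    push_neg at hcon
    have hLH1 := locHeavy_one X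
    have hnot : ∀ j n, L ≤ n → 1 ≤ n → ¬ LocHeavy X j n := by
      intro j n hLn h1 hLH
      obtain ⟨i, hi1, hin, hlt⟩ := hcon j n hLn h1
      exact absurd (hLH i hi1 hin) (not_le.2 hlt)
    have hL2 : 2 ≤ L := by
      by_contra hL
      push_neg at hL
      exact hnot 0 1 (by omega) le_rfl (hLH1 0)
    set ℓ : ℕ → ℕ := fun j => Nat.findGreatest (LocHeavy X j) (L - 1) with hℓdef
    have hub : ∀ j n, 1 ≤ n → LocHeavy X j n → n ≤ L - 1 := by
      intro j n h1 hLHn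
      by_contra hb
      push_neg at hb
      exact hnot j n (by omega) h1 hLHn
    have hℓ1 : ∀ j, 1 ≤ ℓ j := fun j => Nat.le_findGreatest (by omega) (hLH1 j)
    have hℓmax : ∀ j n, 1 ≤ n → LocHeavy X j n → n ≤ ℓ j :=
      fun j n h1 hn => Nat.le_findGreatest (hub j n h1 hn) hn
    have hℓLH : ∀ j, LocHeavy X j (ℓ j) :=
      fun j => Nat.findGreatest_spec (m := 1) (by omega) (hLH1 j)
    let J : ℕ → ℕ := fun k => Nat.rec 0 (fun _ p => p + ℓ p) k
    have hJ : ∀ k, J (k + 1) = J k + ℓ (J k) := fun k => rfl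
    set α : ℕ → ℝ := fun k => (∑ kk ∈ Finset.range (ℓ (J k)), X (J k + kk)) / (ℓ (J k)) with hα
    have hmono : StrictMono α := by
      apply strictMono_nat_of_lt_succ
      intro k
      by_contra hle
      push_neg at hle
      have hcc : LocHeavy X (J k) (ℓ (J k) + ℓ (J (k + 1))) := by
        refine locHeavy_concat (hℓ1 _) (hℓ1 _) (hℓLH _) ?_ ?_
        · rw [← hJ k]; exact hℓLH _
        · have : J k + ℓ (J k) = J (k + 1) := (hJ k).symm
          rw [this]
          exact hle
      have h1 := hℓmax (J k) _ (by have := hℓ1 (J k); omega) hcc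
      have := hℓ1 (J (k + 1))
      omega
    have hflt : ∀ k, ℓ (J k) < L :=
      fun k => lt_of_le_of_lt (hub _ _ (hℓ1 _) (hℓLH _)) (by omega)
    obtain ⟨m, hm⟩ := Finite.exists_infinite_fiber (fun k => (⟨ℓ (J k), hflt k⟩ : Fin L))
    rw [Set.infinite_coe_iff] at hm
    set p : ℕ → Prop := fun k => ℓ (J k) = m.1 with hp
    have hpinf : (setOf p).Infinite := by
      refine hm.mono fun k hk => ?_
      have : (⟨ℓ (J k), hflt k⟩ : Fin L) = m := hk
      exact congrArg Fin.val this
    have hse : StrictMono (Nat.nth p) := Nat.nth_strictMono hpinf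
    have hmem : ∀ k, ℓ (J (Nat.nth p k)) = m.1 := fun k => Nat.nth_mem_of_infinite hpinf k
    have hm1 : 1 ≤ m.1 := by rw [← hmem 0]; exact hℓ1 _
    have hm0 : (0:ℝ) < (m.1 : ℝ) := by exact_mod_cast hm1
    have hβ : StrictMono fun k => ∑ i ∈ Finset.range m.1, X (J (Nat.nth p k) + i) := by
      intro a b hab
      have h := hmono (hse hab)
      rw [hα] at h
      simp only at h
      rw [hmem a, hmem b] at h
      exact (div_lt_div_iff_of_pos_right hm0).mp h
    exact aux_sum s hwo m.1 (fun k i => X (J (Nat.nth p k) + i)) (fun k i _ => hX _) hβ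
end

section
/- Let M : ℕ → ℕ be the Morse sequence, M(n) = (sum of the binary digits of n) mod 2. Then for every j ∈ ℕ, every k ∈ ℕ, and every n with 2k < n ≤ 2k+2, the factor of M of length n starting at position j satisfies k ≤ ∑_{i=0}^{n-1} M(j+i) ≤ k+2. -/
lemma morse_pair (M : ℕ → ℕ) (hM : ∀ n, M n = (Nat.digits 2 n).sum % 2) (m : ℕ) :
    M (2 * m) + M (2 * m + 1) = 1 := by
  rcases Nat.eq_zero_or_pos m with rfl | hm
  · simp [hM]
  · have h1 : Nat.digits 2 (2 * m) = 0 :: Nat.digits 2 m := by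
      rw [Nat.digits_def' (by norm_num) (by omega)]
      congr 1
      · omega
      · congr 1; omega
    have h2 : Nat.digits 2 (2 * m + 1) = 1 :: Nat.digits 2 m := by
      rw [Nat.digits_def' (by norm_num) (by omega)]
      congr 1
      · omega
      · congr 1; omega
    rw [hM, hM, h1, h2]
    simp only [List.sum_cons]
    omega

lemma morse_block (M : ℕ → ℕ) (hM : ∀ n, M n = (Nat.digits 2 n).sum % 2) (t a : ℕ) :
    ∑ i ∈ Finset.range (2 * t), M (2 * a + i) = t := by
  induction t with
  | zero => simp
  | succ t ih =>
      have : 2 * (t + 1) = (2 * t + 1) + 1 := by ring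
      rw [this, Finset.sum_range_succ, Finset.sum_range_succ, ih]
      have := morse_pair M hM (a + t)
      have e1 : 2 * a + 2 * t = 2 * (a + t) := by ring
      have e2 : 2 * a + (2 * t + 1) = 2 * (a + t) + 1 := by ring
      rw [e1, e2]
      omega

lemma morse_le_one (M : ℕ → ℕ) (hM : ∀ n, M n = (Nat.digits 2 n).sum % 2) (n : ℕ) :
    M n ≤ 1 := by
  rw [hM]; omega

/-- Any factor of the Morse sequence `M(n) = s₂(n) mod 2` of length `n`
with `2k < n ≤ 2k + 2` has weight between `k` and `k + 2`. -/
theorem morse_factor_weight_bounds (M : ℕ → ℕ) (hM : ∀ n, M n = (Nat.digits 2 n).sum % 2)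
    (j k n : ℕ) (h1 : 2 * k < n) (h2 : n ≤ 2 * k + 2) :
    k ≤ ∑ i ∈ Finset.range n, M (j + i) ∧ ∑ i ∈ Finset.range n, M (j + i) ≤ k + 2 := by
  constructor
  · rcases Nat.even_or_odd j with ⟨a, ha⟩ | ⟨a, ha⟩
    · have e : ∑ i ∈ Finset.range (2 * k), M (j + i) = k := by
        have e0 : ∑ i ∈ Finset.range (2 * k), M (j + i)
            = ∑ i ∈ Finset.range (2 * k), M (2 * a + i) :=
          Finset.sum_congr rfl fun i _ => by congr 1; omega
        rw [e0, morse_block M hM k a]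
      have hsub : ∑ i ∈ Finset.range (2 * k), M (j + i)
          ≤ ∑ i ∈ Finset.range n, M (j + i) :=
        Finset.sum_le_sum_of_subset (Finset.range_subset_range.2 (by omega))
      omega
    · have key : ∑ i ∈ Finset.range (2 * k + 1), M (j + i)
          = (∑ i ∈ Finset.range (2 * k), M (2 * (a + 1) + i)) + M (j + 0) := by
        rw [Finset.sum_range_succ',
          Finset.sum_congr rfl (fun i (_ : i ∈ Finset.range (2 * k)) =>
            show M (j + (i + 1)) = M (2 * (a + 1) + i) by congr 1; omega)]
      have hb := morse_block M hM k (a + 1)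
      have hsub : ∑ i ∈ Finset.range (2 * k + 1), M (j + i)
          ≤ ∑ i ∈ Finset.range n, M (j + i) :=
        Finset.sum_le_sum_of_subset (Finset.range_subset_range.2 (by omega))
      omega
  · have hsub : ∑ i ∈ Finset.range n, M (j + i)
        ≤ ∑ i ∈ Finset.range (2 * k + 2), M (j + i) :=
      Finset.sum_le_sum_of_subset (Finset.range_subset_range.2 (by omega))
    rcases Nat.even_or_odd j with ⟨a, ha⟩ | ⟨a, ha⟩
    · have e : ∑ i ∈ Finset.range (2 * k + 2), M (j + i) = k + 1 := by
        have e0 : ∑ i ∈ Finset.range (2 * (k + 1)), M (j + i)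
            = ∑ i ∈ Finset.range (2 * (k + 1)), M (2 * a + i) :=
          Finset.sum_congr rfl fun i _ => by congr 1; omega
        rw [show 2 * k + 2 = 2 * (k + 1) by ring, e0, morse_block M hM (k + 1) a]
      omega
    · have key : ∑ i ∈ Finset.range (2 * k + 2), M (j + i)
          = (∑ i ∈ Finset.range (2 * k + 1), M (2 * (a + 1) + i)) + M (j + 0) := by
        rw [Finset.sum_range_succ',
          Finset.sum_congr rfl (fun i (_ : i ∈ Finset.range (2 * k + 1)) =>
            show M (j + (i + 1)) = M (2 * (a + 1) + i) by congr 1; omega)]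
      have key2 : ∑ i ∈ Finset.range (2 * k + 1), M (2 * (a + 1) + i)
          = (∑ i ∈ Finset.range (2 * k), M (2 * (a + 1) + i)) + M (2 * (a + 1) + 2 * k) :=
        Finset.sum_range_succ _ _
      have hb := morse_block M hM k (a + 1)
      have hm1 := morse_le_one M hM (j + 0)
      have hm2 := morse_le_one M hM (2 * (a + 1) + 2 * k)
      omega
end

section
/- Let M : ℕ → ℕ be the Morse sequence, M(n) = (sum of the binary digits of n) mod 2. Let X : ℕ → ℕ be a sequence such that every finite initial word X(0) … X(n-1) is a factor of M, and suppose X(0) = X(1) = 1. Then X is (1/2)-heavy: for every n ≥ 1, ∑_{i=0}^{n-1} X(i) ≥ n/2. -/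
/-- Any sequence all of whose initial words are factors of the Morse
sequence `M(n) = s₂(n) mod 2` and which begins with `11` is `1/2`-heavy. -/
theorem morse_begins_one_one_is_half_heavy
    (M : ℕ → ℕ) (hM : ∀ n, M n = (Nat.digits 2 n).sum % 2)
    (X : ℕ → ℕ) (hfac : ∀ n : ℕ, ∃ j : ℕ, ∀ i < n, X i = M (j + i))
    (h0 : X 0 = 1) (h1 : X 1 = 1) :
    ∀ n : ℕ, 1 ≤ n → (n : ℝ) / 2 ≤ ∑ i ∈ Finset.range n, (X i : ℝ) := by
  have hMpair : ∀ k, M (2 * k) + M (2 * k + 1) = 1 := by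
    intro k
    rw [hM, hM]
    rcases Nat.eq_zero_or_pos k with hk | hk
    · subst hk; simp
    · have h1 : 2 * k % 2 = 0 := by omega
      have h2 : (2 * k + 1) % 2 = 1 := by omega
      have h3 : 2 * k / 2 = k := by omega
      have h4 : (2 * k + 1) / 2 = k := by omega
      have d1 := Nat.digits_def' (b := 2) (by norm_num) (show 0 < 2 * k by omega)
      have d2 := Nat.digits_def' (b := 2) (by norm_num) (show 0 < 2 * k + 1 by omega)
      rw [h1, h3] at d1
      rw [h2, h4] at d2
      rw [d1, d2]
      simp
      omega
  intro n hn
  have key : n ≤ 2 * ∑ i ∈ Finset.range n, X i := by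
    rcases Nat.lt_or_ge n 2 with hn2 | hn2
    · interval_cases n
      simp [h0]
    · obtain ⟨j, hj⟩ := hfac n
      obtain ⟨t, rfl⟩ : ∃ t, j = 2 * t + 1 := by
        rcases Nat.even_or_odd j with ⟨t, rfl⟩ | ⟨t, rfl⟩
        · exfalso
          have e0 := hj 0 (by omega)
          have e1 := hj 1 (by omega)
          have hp := hMpair t
          rw [two_mul] at hp
          simp only [Nat.add_zero] at e0
          rw [h0] at e0
          rw [h1] at e1
          omega
        · exact ⟨t, rfl⟩
      have step : ∀ q, 2 * q + 1 ≤ n → q + 1 ≤ ∑ i ∈ Finset.range (2 * q + 1), X i := by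
        intro q
        induction q with
        | zero => intro _; simpa using le_of_eq h0.symm
        | succ p ih =>
          intro hq
          have hs : 2 * (p + 1) + 1 = (2 * p + 1) + 1 + 1 := by ring
          rw [hs, Finset.sum_range_succ, Finset.sum_range_succ]
          have e1 := hj (2 * p + 1) (by omega)
          have e2 := hj (2 * p + 2) (by omega)
          have hp := hMpair (t + p + 1)
          have ihp := ih (by omega)
          have hXpair : X (2 * p + 1) + X (2 * p + 2) = 1 := by
            rw [e1, e2]
            have ea : 2 * t + 1 + (2 * p + 1) = 2 * (t + p + 1) := by ring
            have eb : 2 * t + 1 + (2 * p + 2) = 2 * (t + p + 1) + 1 := by ring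
            rw [ea, eb]
            exact hp
          omega
      rcases Nat.even_or_odd n with ⟨q, hq⟩ | ⟨q, hq⟩
      · have hq1 : 1 ≤ q := by omega
        have hsub : Finset.range (2 * (q - 1) + 1) ⊆ Finset.range n :=
          Finset.range_subset_range.mpr (by omega)
        have hmono := Finset.sum_le_sum_of_subset (f := X) hsub
        have hstep := step (q - 1) (by omega)
        omega
      · have hstep := step q (by omega)
        have hsub : Finset.range (2 * q + 1) ⊆ Finset.range n :=
          Finset.range_subset_range.mpr (by omega)
        have hmono := Finset.sum_le_sum_of_subset (f := X) hsub
        omega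
  have hcast : ((∑ i ∈ Finset.range n, X i : ℕ) : ℝ) = ∑ i ∈ Finset.range n, (X i : ℝ) := by
    push_cast; ring
  have : (n : ℝ) ≤ 2 * ((∑ i ∈ Finset.range n, X i : ℕ) : ℝ) := by exact_mod_cast key
  rw [hcast] at this
  linarith
end

section
/- Let (Ω, μ) be a probability space, T : Ω → Ω a measurable map preserving μ, and Γ ⊆ Ω a measurable set whose measure α = μ(Γ) is a rational number. Suppose that for μ-almost every ω ∈ Ω and every n ∈ ℕ, |S_n(ω) − nα| ≤ 1, where S_n(ω) = ∑_{i=0}^{n-1} χ_Γ(T^i ω). Then the heavy set {ω : ∀ n ≥ 0, S_n(ω) ≥ nα} has positive μ-measure. -/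
open MeasureTheory

/-- If `Γ` has rational measure `α` and the Birkhoff sums of `χ_Γ` satisfy
`|S_n(ω) - nα| ≤ 1` for a.e. `ω` and all `n`, then the heavy set
`{ω : ∀ n, S_n(ω) ≥ nα}` has positive measure. -/
theorem heavy_set_pos_measure_of_rational_bounded_sums
    {Ω : Type*} [MeasurableSpace Ω] (μ : Measure Ω) [IsProbabilityMeasure μ]
    (T : Ω → Ω) (hT : MeasurePreserving T μ μ)
    (Γ : Set Ω) (hΓ : MeasurableSet Γ)
    (hrat : ∃ q : ℚ, (μ Γ).toReal = (q : ℝ))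
    (hbd : ∀ᵐ ω ∂μ, ∀ n : ℕ,
      |(∑ i ∈ Finset.range n, Γ.indicator (fun _ => (1 : ℝ)) (T^[i] ω)) -
        n * (μ Γ).toReal| ≤ 1) :
    0 < μ {ω | ∀ n : ℕ, (n : ℝ) * (μ Γ).toReal ≤
      ∑ i ∈ Finset.range n, Γ.indicator (fun _ => (1 : ℝ)) (T^[i] ω)} := by
  classical
  by_contra hpos
  have hH0 : μ {ω | ∀ n : ℕ, (n : ℝ) * (μ Γ).toReal ≤
      ∑ i ∈ Finset.range n, Γ.indicator (fun _ => (1 : ℝ)) (T^[i] ω)} = 0 := by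
    simpa [le_zero_iff] using (not_lt.mp hpos)
  obtain ⟨q, hq⟩ := hrat
  set α : ℝ := (μ Γ).toReal with hα
  set f : Ω → ℝ := fun ω => Γ.indicator (fun _ => (1 : ℝ)) ω - α with hfdef
  set S : ℕ → Ω → ℝ := fun n ω => ∑ i ∈ Finset.range n, f (T^[i] ω) with hSdef
  have hS_eq : ∀ n ω, S n ω =
      (∑ i ∈ Finset.range n, Γ.indicator (fun _ => (1 : ℝ)) (T^[i] ω)) - n * α := by
    intro n ω
    simp [hSdef, hfdef, Finset.sum_sub_distrib, Finset.sum_const, nsmul_eq_mul]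
  have hD0 : (0 : ℝ) < (q.den : ℝ) := by exact_mod_cast q.pos
  -- integer-valued sums
  have hsum_nat : ∀ n (ω : Ω), ∃ k : ℕ,
      (∑ i ∈ Finset.range n, Γ.indicator (fun _ => (1 : ℝ)) (T^[i] ω)) = (k : ℝ) := by
    intro n ω
    refine ⟨((Finset.range n).filter (fun i => T^[i] ω ∈ Γ)).card, ?_⟩
    rw [Finset.card_filter]
    push_cast
    refine Finset.sum_congr rfl fun i _ => ?_
    by_cases h : T^[i] ω ∈ Γ <;> simp [h]
  have hstep : ∀ n (ω : Ω), S n ω < 0 → S n ω ≤ -1 / q.den := by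
    intro n ω hneg
    obtain ⟨k, hk⟩ := hsum_nat n ω
    have hint : S n ω * q.den = ((k * q.den - n * q.num : ℤ) : ℝ) := by
      have hnum : α * q.den = (q.num : ℝ) := by
        rw [hq]
        exact_mod_cast congrArg (fun r : ℚ => (r : ℝ)) (Rat.mul_den_eq_num q)
      rw [hS_eq, hk]
      push_cast
      ring_nf
      nlinarith [hnum]
    have hm : ((k * q.den - n * q.num : ℤ) : ℝ) < 0 := by
      rw [← hint]; exact mul_neg_of_neg_of_pos hneg hD0
    have hm1 : ((k * q.den - n * q.num : ℤ) : ℝ) ≤ -1 := by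
      exact_mod_cast Int.le_of_lt_add_one (by exact_mod_cast (by linarith : ((k * q.den - n * q.num : ℤ) : ℝ) < -1 + 1))
    rw [le_div_iff₀ hD0]
    rw [hint]
    linarith
  -- measurability
  have hfm : Measurable f := (measurable_const.indicator hΓ).sub measurable_const
  have hSm : ∀ n, Measurable (S n) := fun n =>
    Finset.measurable_sum _ fun i _ => hfm.comp (hT.measurable.iterate i)
  set g : Ω → ℝ := fun ω => ⨅ n, S n ω with hgdef
  have hgm : Measurable g := Measurable.iInf hSm
  -- a.e. bounds
  have habs : ∀ᵐ ω ∂μ, ∀ n, |S n ω| ≤ 1 := by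
    filter_upwards [hbd] with ω h n
    rw [hS_eq]; exact h n
  have hbddB : ∀ ω, (∀ n, |S n ω| ≤ 1) → BddBelow (Set.range fun n => S n ω) := by
    rintro ω h
    exact ⟨-1, by rintro x ⟨n, rfl⟩; linarith [(abs_le.mp (h n)).1]⟩
  have hg_le : ∀ ω, (∀ n, |S n ω| ≤ 1) → g ω ≤ 0 := by
    intro ω h
    have := ciInf_le (hbddB ω h) 0
    simpa [hgdef, hSdef] using this
  have hg_ge : ∀ ω, (∀ n, |S n ω| ≤ 1) → -1 ≤ g ω := by
    intro ω h
    exact le_ciInf fun n => by linarith [(abs_le.mp (h n)).1]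
  -- a.e. there is a negative sum
  have hne : ∀ᵐ ω ∂μ, ∃ n, S n ω < 0 := by
    have h1 : ∀ᵐ ω ∂μ, ¬ (∀ n : ℕ, (n : ℝ) * α ≤
        ∑ i ∈ Finset.range n, Γ.indicator (fun _ => (1 : ℝ)) (T^[i] ω)) := by
      rw [ae_iff]
      simpa only [not_not] using hH0
    filter_upwards [h1] with ω h
    push_neg at h
    obtain ⟨n, hn⟩ := h
    exact ⟨n, by rw [hS_eq]; linarith⟩
  have hgneg : ∀ᵐ ω ∂μ, g ω ≤ -1 / q.den := by
    filter_upwards [habs, hne] with ω h ⟨n, hn⟩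
    exact le_trans (ciInf_le (hbddB ω h) n) (hstep n ω hn)
  -- integrability
  have hgint : Integrable g μ := by
    refine Integrable.mono' (integrable_const (1 : ℝ)) hgm.aestronglyMeasurable ?_
    filter_upwards [habs] with ω h
    rw [Real.norm_eq_abs, abs_le]
    exact ⟨hg_ge ω h, le_trans (hg_le ω h) (by norm_num)⟩
  have hfint : Integrable f μ := ((integrable_const (1 : ℝ)).indicator hΓ).sub (integrable_const α)
  have hgTint : Integrable (fun ω => g (T ω)) μ :=
    (hT.integrable_comp hgm.aestronglyMeasurable).mpr hgint
  -- integral of f is 0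
  have hfint0 : ∫ ω, f ω ∂μ = 0 := by
    rw [hfdef]
    rw [integral_sub ((integrable_const (1 : ℝ)).indicator hΓ) (integrable_const α)]
    rw [integral_indicator_const (1 : ℝ) hΓ, integral_const]
    simp [hα, Measure.real]
  have hgT : ∫ ω, g (T ω) ∂μ = ∫ ω, g ω ∂μ := by
    conv_rhs => rw [← hT.map_eq]
    rw [integral_map hT.measurable.aemeasurable hgm.aestronglyMeasurable]
  -- the key identity
  have hnonneg : ∀ᵐ ω ∂μ, 0 ≤ g (T ω) - g ω + f ω := by
    filter_upwards [habs] with ω h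
    have hkey : g ω - f ω ≤ g (T ω) := by
      refine le_ciInf fun n => ?_
      have h1 : S n (T ω) = S (n + 1) ω - f ω := by
        simp only [hSdef, Finset.sum_range_succ']
        simp [Function.iterate_succ_apply, add_sub_cancel_right]
      have h2 : g ω ≤ S (n + 1) ω := ciInf_le (hbddB ω h) (n + 1)
      rw [h1]; linarith
    linarith
  have hIsub : Integrable (fun ω => g (T ω) - g ω) μ := hgTint.sub hgint
  have hintsum : Integrable (fun ω => g (T ω) - g ω + f ω) μ := hIsub.add hfint
  have hzero : ∫ ω, (g (T ω) - g ω + f ω) ∂μ = 0 := by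
    rw [integral_add hIsub hfint, integral_sub hgTint hgint, hgT, hfint0]
    ring
  have heq : (fun ω => g (T ω) - g ω + f ω) =ᵐ[μ] 0 :=
    ((integral_eq_zero_iff_of_nonneg_ae hnonneg hintsum).mp hzero)
  -- combine into one a.e. property, then pull back along all iterates
  have hP : ∀ᵐ ω ∂μ, (∀ n, |S n ω| ≤ 1) ∧ g ω ≤ -1 / q.den ∧
      g (T ω) - g ω + f ω = 0 := by
    filter_upwards [habs, hgneg, heq] with ω h1 h2 h3
    exact ⟨h1, h2, h3⟩
  have hall : ∀ᵐ ω ∂μ, ∀ k : ℕ, (∀ n, |S n (T^[k] ω)| ≤ 1) ∧ g (T^[k] ω) ≤ -1 / q.den ∧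
      g (T (T^[k] ω)) - g (T^[k] ω) + f (T^[k] ω) = 0 := by
    rw [ae_all_iff]
    intro k
    exact (hT.iterate k).quasiMeasurePreserving.tendsto_ae.eventually hP
  obtain ⟨ω, hω⟩ : ∃ ω, ∀ k : ℕ, (∀ n, |S n (T^[k] ω)| ≤ 1) ∧ g (T^[k] ω) ≤ -1 / q.den ∧
      g (T (T^[k] ω)) - g (T^[k] ω) + f (T^[k] ω) = 0 := hall.exists
  -- cocycle identity
  have hcoc : ∀ n : ℕ, g (T^[n] ω) = g ω - S n ω := by
    intro n
    induction n with
    | zero => simp [hSdef]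
    | succ n ih =>
      have h3 := (hω n).2.2
      have : g (T^[n + 1] ω) = g (T^[n] ω) - f (T^[n] ω) := by
        rw [Function.iterate_succ_apply']; linarith
      rw [this, ih, hSdef]
      simp only [Finset.sum_range_succ]
      ring_nf
  -- extract an almost-attaining index and contradict
  have h0 := hω 0
  simp only [Function.iterate_zero, id_eq] at h0
  have hlt : g ω < g ω + 1 / (2 * q.den) := by
    have : (0:ℝ) < 1 / (2 * q.den) := by positivity
    linarith
  obtain ⟨n0, hn0⟩ : ∃ n, S n ω < g ω + 1 / (2 * q.den) :=
    exists_lt_of_ciInf_lt hlt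
  have h1 : g (T^[n0] ω) = g ω - S n0 ω := hcoc n0
  have h2 : g (T^[n0] ω) ≤ -1 / q.den := (hω n0).2.1
  have h3 : -1 / (q.den : ℝ) < -(1 / (2 * q.den)) := by
    have hne : (q.den : ℝ) ≠ 0 := ne_of_gt hD0
    rw [div_lt_iff₀ hD0, neg_mul]
    have he : (1 / (2 * (q.den:ℝ))) * q.den = 1 / 2 := by field_simp
    rw [he]
    norm_num
  linarith [h1, h2, hn0, h3]
end

section
/- Let X : ℕ → {0,1} be a Sturmian sequence whose density α = lim_{n→∞} (1/n)∑_{i=0}^{n-1} X(i) is irrational. Then, with σ the shift map (σ(Y)(n) = Y(n+1)) and the product topology on {0,1}^ℕ, the closure of the forward orbit {σ^n X : n ∈ ℕ} contains exactly one sequence Y which is α-heavy, i.e. exactly one Y with ∑_{i=0}^{n-1} Y(i) ≥ nα for all n ≥ 1. -/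
open Filter Finset Topology

private lemma aux_int (X : ℕ → ℝ) (hX : ∀ i, X i = 0 ∨ X i = 1) (j n : ℕ) :
    ∃ z : ℤ, (∑ k ∈ Finset.range n, X (j + k)) = (z : ℝ) := by
  induction n with
  | zero => exact ⟨0, by simp⟩
  | succ n ih =>
    obtain ⟨z, hz⟩ := ih
    rcases hX (j + n) with h | h
    · exact ⟨z, by rw [Finset.sum_range_succ, hz, h, add_zero]⟩
    · exact ⟨z + 1, by rw [Finset.sum_range_succ, hz, h]; push_cast; ring⟩

private lemma aux_nonneg (X : ℕ → ℝ) (hX : ∀ i, X i = 0 ∨ X i = 1) (j n : ℕ) :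
    0 ≤ (∑ k ∈ Finset.range n, X (j + k)) ∧ (∑ k ∈ Finset.range n, X (j + k)) ≤ n := by
  constructor
  · exact Finset.sum_nonneg fun k _ => by rcases hX (j + k) with h | h <;> simp [h]
  · calc (∑ k ∈ Finset.range n, X (j + k)) ≤ ∑ k ∈ Finset.range n, (1 : ℝ) :=
        Finset.sum_le_sum fun k _ => by rcases hX (j + k) with h | h <;> simp [h]
    _ = n := by simp

private lemma aux_shift (X : ℕ → ℝ) (j a b : ℕ) :
    (∑ k ∈ Finset.range (a + b), X (j + k)) =
      (∑ k ∈ Finset.range a, X (j + k)) + ∑ k ∈ Finset.range b, X (j + a + k) := by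
  rw [Finset.sum_range_add]
  simp [add_assoc]

private lemma aux_dens_shift (X : ℕ → ℝ) (hX : ∀ i, X i = 0 ∨ X i = 1) (α : ℝ)
    (hdens : Filter.Tendsto (fun n : ℕ => (∑ i ∈ Finset.range n, X i) / n)
      Filter.atTop (nhds α)) (j : ℕ) :
    Filter.Tendsto (fun n : ℕ => (∑ k ∈ Finset.range n, X (j + k)) / n)
      Filter.atTop (nhds α) := by
  have hdiff : ∀ n : ℕ, |(∑ k ∈ Finset.range n, X (j + k)) - ∑ i ∈ Finset.range n, X i| ≤ j := by
    intro n
    have h1 : (∑ k ∈ Finset.range (j + n), X k) =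
        (∑ k ∈ Finset.range j, X k) + ∑ k ∈ Finset.range n, X (j + k) := by
      have := aux_shift X 0 j n
      simpa using this
    have h2 : (∑ k ∈ Finset.range (j + n), X k) =
        (∑ k ∈ Finset.range n, X k) + ∑ k ∈ Finset.range j, X (n + k) := by
      have := aux_shift X 0 n j
      simpa [add_comm n j] using this
    have key : (∑ k ∈ Finset.range n, X (j + k)) - ∑ i ∈ Finset.range n, X i
        = (∑ k ∈ Finset.range j, X (n + k)) - ∑ k ∈ Finset.range j, X k := by
      have h3 : (∑ k ∈ Finset.range j, X k) = ∑ k ∈ Finset.range j, X (0 + k) := by simp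
      linarith [h1, h2]
    rw [key]
    have b1 := aux_nonneg X hX n j
    have b2 : 0 ≤ (∑ k ∈ Finset.range j, X k) ∧ (∑ k ∈ Finset.range j, X k) ≤ j := by
      simpa using aux_nonneg X hX 0 j
    rw [abs_sub_le_iff]
    constructor <;> linarith [b1.1, b1.2, b2.1, b2.2]
  have h0 : Filter.Tendsto
      (fun n : ℕ => (∑ k ∈ Finset.range n, X (j + k)) / n - (∑ i ∈ Finset.range n, X i) / n)
      Filter.atTop (nhds 0) := by
    apply squeeze_zero_norm (a := fun n : ℕ => (j : ℝ) / n)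
    · intro n
      rcases Nat.eq_zero_or_pos n with h | h
      · subst h; simp
      · have hn : (0:ℝ) < n := by exact_mod_cast h
        rw [Real.norm_eq_abs, div_sub_div_same, abs_div, abs_of_pos hn]
        gcongr
        exact hdiff n

    · exact tendsto_const_div_atTop_nhds_zero_nat (j : ℝ)
  have := h0.add hdens
  simpa using this

private lemma aux_balance (X : ℕ → ℝ) (hX : ∀ i, X i = 0 ∨ X i = 1)
    (hSturm : ∀ j₁ j₂ n : ℕ,
      |(∑ k ∈ Finset.range n, X (j₁ + k)) - ∑ k ∈ Finset.range n, X (j₂ + k)| ≤ 1)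
    (α : ℝ)
    (hdens : Filter.Tendsto (fun n : ℕ => (∑ i ∈ Finset.range n, X i) / n)
      Filter.atTop (nhds α)) (j n : ℕ) (hn : 1 ≤ n) :
    |(∑ k ∈ Finset.range n, X (j + k)) - (n : ℝ) * α| ≤ 1 := by
  set s : ℝ := ∑ k ∈ Finset.range n, X (j + k) with hs
  have hblock : ∀ T : ℕ, (∑ k ∈ Finset.range (T * n), X (j + k)) =
      ∑ t ∈ Finset.range T, ∑ k ∈ Finset.range n, X (j + t * n + k) := by
    intro T
    induction T with
    | zero => simp
    | succ T ih =>
      have : (T + 1) * n = T * n + n := by ring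
      rw [this, aux_shift X j (T * n) n, ih, Finset.sum_range_succ]
  have hTbound : ∀ T : ℕ, |(∑ k ∈ Finset.range (T * n), X (j + k)) - T * s| ≤ T := by
    intro T
    rw [hblock T]
    have : (T : ℝ) * s = ∑ t ∈ Finset.range T, s := by simp [mul_comm]
    rw [this, ← Finset.sum_sub_distrib]
    calc |∑ t ∈ Finset.range T, ((∑ k ∈ Finset.range n, X (j + t * n + k)) - s)|
        ≤ ∑ t ∈ Finset.range T, |(∑ k ∈ Finset.range n, X (j + t * n + k)) - s| :=
          Finset.abs_sum_le_sum_abs _ _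
      _ ≤ ∑ t ∈ Finset.range T, (1 : ℝ) :=
          Finset.sum_le_sum fun t _ => hSturm (j + t * n) j n
      _ = T := by simp
  -- limit along T*n
  have hnR : (0:ℝ) < n := by exact_mod_cast hn
  have hc : Filter.Tendsto (fun T : ℕ => (∑ k ∈ Finset.range (T * n), X (j + k)) / ((T * n : ℕ) : ℝ))
      Filter.atTop (nhds α) := by
    exact (aux_dens_shift X hX α hdens j).comp
      (tendsto_atTop_mono (fun T => Nat.le_mul_of_pos_right T hn) tendsto_id)
  have hev : ∀ T : ℕ, 1 ≤ T →
      |(∑ k ∈ Finset.range (T * n), X (j + k)) / ((T * n : ℕ) : ℝ) - s / n| ≤ 1 / n := by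
    intro T hT
    have hT0 : (0:ℝ) < T := by exact_mod_cast hT
    have hTn : ((T * n : ℕ) : ℝ) = (T : ℝ) * n := by push_cast; ring
    rw [hTn]
    have h1 : (∑ k ∈ Finset.range (T * n), X (j + k)) / ((T:ℝ) * n) - s / n
        = ((∑ k ∈ Finset.range (T * n), X (j + k)) - T * s) / ((T:ℝ) * n) := by
      field_simp
    rw [h1, abs_div, abs_of_pos (mul_pos hT0 hnR)]
    have h2 : (T:ℝ)/((T:ℝ)*n) = 1/n := by field_simp
    rw [← h2]
    gcongr
    exact hTbound T
  have habs : Filter.Tendsto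
      (fun T : ℕ => |(∑ k ∈ Finset.range (T * n), X (j + k)) / ((T * n : ℕ) : ℝ) - s / n|)
      Filter.atTop (nhds |α - s / n|) := (hc.sub_const _).abs
  have hle : |α - s / n| ≤ 1 / n :=
    le_of_tendsto habs (Filter.eventually_atTop.2 ⟨1, hev⟩)
  have hkey : |s - (n:ℝ) * α| = (n:ℝ) * |α - s / n| := by
    rw [← abs_of_pos hnR, ← abs_mul, abs_sub_comm]
    congr 1
    field_simp
    rw [abs_of_pos hnR]
    ring
  rw [hkey]
  calc (n:ℝ) * |α - s / n| ≤ (n:ℝ) * (1 / n) := by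
        exact mul_le_mul_of_nonneg_left hle hnR.le
    _ = 1 := by field_simp


private lemma aux_ceil_irr (x : ℝ) (h : Irrational x) : (⌈x⌉ : ℤ) = ⌊x⌋ + 1 := by
  have h1 : (⌊x⌋:ℝ) < x := lt_of_le_of_ne (Int.floor_le x) (Ne.symm (h.ne_int _))
  have h2 : ⌈x⌉ ≤ ⌊x⌋ + 1 := Int.ceil_le_floor_add_one x
  have h3 : ⌊x⌋ < ⌈x⌉ := by
    have := Int.le_ceil x
    exact_mod_cast lt_of_lt_of_le h1 this
  omega

/-- Pinning: every window sum is an integer between `⌊nα⌋` and `⌈nα⌉`. -/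
private lemma aux_pin (X : ℕ → ℝ) (hX : ∀ i, X i = 0 ∨ X i = 1)
    (hSturm : ∀ j₁ j₂ n : ℕ,
      |(∑ k ∈ Finset.range n, X (j₁ + k)) - ∑ k ∈ Finset.range n, X (j₂ + k)| ≤ 1)
    (α : ℝ) (hα : Irrational α)
    (hdens : Filter.Tendsto (fun n : ℕ => (∑ i ∈ Finset.range n, X i) / n)
      Filter.atTop (nhds α)) (j n : ℕ) (hn : 1 ≤ n) :
    ∃ z : ℤ, (∑ k ∈ Finset.range n, X (j + k)) = (z : ℝ) ∧
      ⌊(n:ℝ) * α⌋ ≤ z ∧ z ≤ ⌈(n:ℝ) * α⌉ := by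
  obtain ⟨z, hz⟩ := aux_int X hX j n
  have hb := aux_balance X hX hSturm α hdens j n hn
  rw [hz, abs_sub_le_iff] at hb
  have hirr : Irrational ((n:ℝ) * α) := hα.natCast_mul (by omega)
  have hceil := aux_ceil_irr _ hirr
  refine ⟨z, hz, ?_, ?_⟩
  · -- (n:ℝ)*α - 1 ≤ z  ⇒  ⌈nα - 1⌉ ≤ z  ⇒  ⌈nα⌉ - 1 ≤ z  ⇒ ⌊nα⌋ ≤ z
    have : ⌈(n:ℝ) * α - 1⌉ ≤ z := Int.ceil_le.2 (by linarith)
    rw [Int.ceil_sub_one] at this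
    omega
  · have : z ≤ ⌊(n:ℝ) * α + 1⌋ := Int.le_floor.2 (by linarith)
    rw [Int.floor_add_one] at this
    omega

/-- Existence of arbitrarily long heavy windows. -/
private lemma aux_window (X : ℕ → ℝ) (hX : ∀ i, X i = 0 ∨ X i = 1)
    (hSturm : ∀ j₁ j₂ n : ℕ,
      |(∑ k ∈ Finset.range n, X (j₁ + k)) - ∑ k ∈ Finset.range n, X (j₂ + k)| ≤ 1)
    (α : ℝ) (hα : Irrational α)
    (hdens : Filter.Tendsto (fun n : ℕ => (∑ i ∈ Finset.range n, X i) / n)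
      Filter.atTop (nhds α)) (N : ℕ) :
    ∃ m : ℕ, ∀ n : ℕ, 1 ≤ n → n ≤ N → (n:ℝ) * α ≤ ∑ k ∈ Finset.range n, X (m + k) := by
  by_contra hcon
  push_neg at hcon
  -- every position has a deficient window of length ≤ N
  obtain ⟨n₀, hn₀1, hn₀N, _⟩ := hcon 0
  have hNne : (Finset.Icc 1 N).Nonempty := ⟨n₀, Finset.mem_Icc.2 ⟨hn₀1, hn₀N⟩⟩
  set δ : ℝ := (Finset.Icc 1 N).inf' hNne (fun n => (n:ℝ) * α - ⌊(n:ℝ) * α⌋) with hδ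
  have hδpos : 0 < δ := by
    rw [hδ, Finset.lt_inf'_iff]
    intro n hn
    rw [Finset.mem_Icc] at hn
    have hirr : Irrational ((n:ℝ) * α) := hα.natCast_mul (by omega)
    have := lt_of_le_of_ne (Int.floor_le ((n:ℝ)*α)) (Ne.symm (hirr.ne_int _))
    linarith
  have h' : ∀ m : ℕ, ∃ n : ℕ, 1 ≤ n ∧ n ≤ N ∧
      (∑ k ∈ Finset.range n, X (m + k)) ≤ (n:ℝ) * α - δ := by
    intro m
    obtain ⟨n, hn1, hnN, hlt⟩ := hcon m
    obtain ⟨z, hz, hzl, hzu⟩ := aux_pin X hX hSturm α hα hdens m n hn1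
    refine ⟨n, hn1, hnN, ?_⟩
    have hzle : z ≤ ⌊(n:ℝ) * α⌋ := Int.le_floor.2 (by rw [← hz]; exact hlt.le)
    have hδle : δ ≤ (n:ℝ) * α - ⌊(n:ℝ) * α⌋ :=
      Finset.inf'_le _ (Finset.mem_Icc.2 ⟨hn1, hnN⟩)
    have : (z:ℝ) ≤ (⌊(n:ℝ) * α⌋ : ℤ) := by exact_mod_cast hzle
    linarith [hz ▸ this]
  choose g hg1 hgN hgS using h'
  set p : ℕ → ℕ := fun i => Nat.rec 0 (fun _ q => q + g q) i with hp
  have hp0 : p 0 = 0 := rfl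
  have hpS : ∀ i, p (i + 1) = p i + g (p i) := fun i => rfl
  have hplb : ∀ i, i ≤ p i := by
    intro i
    induction i with
    | zero => simp [hp0]
    | succ i ih => rw [hpS]; have := hg1 (p i); omega
  have hpub : ∀ i, p i ≤ i * N := by
    intro i
    induction i with
    | zero => simp [hp0]
    | succ i ih =>
      rw [hpS]
      have := hgN (p i)
      calc p i + g (p i) ≤ i * N + N := by omega
        _ = (i + 1) * N := by ring
  have hkey : ∀ i, (∑ k ∈ Finset.range (p i), X k) ≤ (p i : ℝ) * α - i * δ := by
    intro i
    induction i with
    | zero => simp [hp0]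
    | succ i ih =>
      rw [hpS]
      have hdec : (∑ k ∈ Finset.range (p i + g (p i)), X k)
          = (∑ k ∈ Finset.range (p i), X k) + ∑ k ∈ Finset.range (g (p i)), X (p i + k) := by
        have := aux_shift X 0 (p i) (g (p i))
        simpa using this
      rw [hdec]
      have := hgS (p i)
      have hcast : ((p i + g (p i) : ℕ) : ℝ) = (p i : ℝ) + (g (p i) : ℝ) := by push_cast; ring
      rw [hcast]
      push_cast
      linarith
  -- contradiction with density
  have hN1 : 1 ≤ N := le_trans hn₀1 hn₀N
  have htend : Filter.Tendsto (fun i : ℕ => (∑ k ∈ Finset.range (p i), X k) / (p i : ℝ))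
      Filter.atTop (nhds α) :=
    hdens.comp (tendsto_atTop_mono hplb tendsto_id)
  have hle : ∀ i : ℕ, 1 ≤ i → (∑ k ∈ Finset.range (p i), X k) / (p i : ℝ) ≤ α - δ / N := by
    intro i hi
    have hpi1 : 1 ≤ p i := le_trans hi (hplb i)
    have hpiR : (0:ℝ) < p i := by exact_mod_cast hpi1
    rw [div_le_iff₀ hpiR]
    have h1 := hkey i
    have h2 : δ / N * (p i : ℝ) ≤ (i : ℝ) * δ := by
      rw [div_mul_eq_mul_div, div_le_iff₀ (by exact_mod_cast hN1 : (0:ℝ) < N)]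
      have : (p i : ℝ) ≤ (i : ℝ) * N := by exact_mod_cast hpub i
      nlinarith
    nlinarith
  have : α ≤ α - δ / N :=
    le_of_tendsto htend (Filter.eventually_atTop.2 ⟨1, hle⟩)
  have : (0:ℝ) < δ / N := div_pos hδpos (by exact_mod_cast hN1)
  linarith


/-- For a Sturmian binary sequence `X` of irrational density `α`, the closure
of the forward shift-orbit of `X` (product topology) contains exactly one `α`-heavy sequence. -/
theorem sturmian_orbit_closure_unique_alpha_heavy
    (X : ℕ → ℝ) (hX : ∀ i, X i = 0 ∨ X i = 1)
    (hSturm : ∀ j₁ j₂ n : ℕ,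
      |(∑ k ∈ Finset.range n, X (j₁ + k)) - ∑ k ∈ Finset.range n, X (j₂ + k)| ≤ 1)
    (α : ℝ) (hα : Irrational α)
    (hdens : Filter.Tendsto (fun n : ℕ => (∑ i ∈ Finset.range n, X i) / n)
      Filter.atTop (nhds α)) :
    ∃! Y : ℕ → ℝ, Y ∈ closure (Set.range fun m : ℕ => fun k : ℕ => X (m + k)) ∧
      ∀ n : ℕ, 1 ≤ n → (n : ℝ) * α ≤ ∑ i ∈ Finset.range n, Y i := by
  set f : ℕ → ℝ := fun t => ((⌈(t : ℝ) * α⌉ : ℤ) : ℝ) with hf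
  set Y : ℕ → ℝ := fun k => f (k + 1) - f k with hY
  have hf0 : f 0 = 0 := by simp [hf]
  have hYsum : ∀ n : ℕ, (∑ i ∈ Finset.range n, Y i) = f n := by
    intro n
    rw [hY]
    rw [Finset.sum_range_sub f n, hf0, sub_zero]
  -- Y is α-heavy
  have hheavy : ∀ n : ℕ, 1 ≤ n → (n : ℝ) * α ≤ ∑ i ∈ Finset.range n, Y i := by
    intro n _
    rw [hYsum]
    exact Int.le_ceil _
  -- heavy windows give exact window sums
  have hwin : ∀ m N : ℕ,
      (∀ n : ℕ, 1 ≤ n → n ≤ N → (n:ℝ) * α ≤ ∑ k ∈ Finset.range n, X (m + k)) →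
      ∀ n : ℕ, n ≤ N → (∑ k ∈ Finset.range n, X (m + k)) = f n := by
    intro m N hm n hnN
    rcases Nat.eq_zero_or_pos n with rfl | hn1
    · simpa using hf0.symm
    · obtain ⟨z, hz, _, hzu⟩ := aux_pin X hX hSturm α hα hdens m n hn1
      have hge : ⌈(n:ℝ) * α⌉ ≤ z := Int.ceil_le.2 (by rw [← hz]; exact hm n hn1 hnN)
      have : z = ⌈(n:ℝ) * α⌉ := le_antisymm hzu hge
      rw [hz, this, hf]
  -- membership in the closure
  choose M hM using fun N => aux_window X hX hSturm α hα hdens N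
  have hconv : Filter.Tendsto (fun N : ℕ => fun k : ℕ => X (M N + k))
      Filter.atTop (nhds Y) := by
    rw [tendsto_pi_nhds]
    intro k
    apply Filter.Tendsto.congr' _ (tendsto_const_nhds : Filter.Tendsto (fun _ : ℕ => Y k) Filter.atTop (nhds (Y k)))
    filter_upwards [Filter.eventually_ge_atTop (k + 1)] with N hN
    have h1 : (∑ i ∈ Finset.range (k+1), X (M N + i)) = f (k + 1) :=
      hwin (M N) N (hM N) (k + 1) hN
    have h2 : (∑ i ∈ Finset.range k, X (M N + i)) = f k :=
      hwin (M N) N (hM N) k (by omega)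
    rw [Finset.sum_range_succ, h2] at h1
    show f (k + 1) - f k = X (M N + k)
    linarith
  have hmem : Y ∈ closure (Set.range fun m : ℕ => fun k : ℕ => X (m + k)) :=
    mem_closure_of_tendsto hconv (Filter.Eventually.of_forall fun N => ⟨M N, rfl⟩)
  refine ⟨Y, ⟨hmem, hheavy⟩, ?_⟩
  -- uniqueness
  rintro Z ⟨hZc, hZh⟩
  have hZsum : ∀ n : ℕ, (∑ i ∈ Finset.range n, Z i) = f n := by
    intro n
    rcases Nat.eq_zero_or_pos n with rfl | hn1
    · simpa using hf0.symm
    · have hcl : IsClosed {W : ℕ → ℝ | (∑ i ∈ Finset.range n, W i) ∈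
          ({((⌊(n:ℝ) * α⌋ : ℤ) : ℝ), ((⌈(n:ℝ) * α⌉ : ℤ) : ℝ)} : Set ℝ)} := by
        have hc : Continuous fun W : ℕ → ℝ => ∑ i ∈ Finset.range n, W i :=
          continuous_finset_sum _ fun i _ => continuous_apply i
        exact IsClosed.preimage hc (((Set.finite_singleton _).insert _).isClosed)
      have hsub : (Set.range fun m : ℕ => fun k : ℕ => X (m + k)) ⊆
          {W : ℕ → ℝ | (∑ i ∈ Finset.range n, W i) ∈
            ({((⌊(n:ℝ) * α⌋ : ℤ) : ℝ), ((⌈(n:ℝ) * α⌉ : ℤ) : ℝ)} : Set ℝ)} := by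
        rintro W ⟨m, rfl⟩
        obtain ⟨z, hz, hzl, hzu⟩ := aux_pin X hX hSturm α hα hdens m n hn1
        have hceil := aux_ceil_irr ((n:ℝ) * α) (hα.natCast_mul (by omega))
        have : z = ⌊(n:ℝ) * α⌋ ∨ z = ⌈(n:ℝ) * α⌉ := by omega
        rcases this with h | h <;> simp only [Set.mem_setOf_eq, hz, h] <;>
          simp [Set.mem_insert_iff]
      have := closure_minimal hsub hcl hZc
      rcases this with h | h
      · exfalso
        have hirr : Irrational ((n:ℝ) * α) := hα.natCast_mul (by omega)
        have hfl : ((⌊(n:ℝ) * α⌋ : ℤ) : ℝ) < (n:ℝ) * α :=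
          lt_of_le_of_ne (Int.floor_le _) (Ne.symm (hirr.ne_int _))
        have := hZh n hn1
        rw [h] at this
        linarith
      · rw [Set.mem_singleton_iff] at h
        rw [h, hf]
  funext k
  have h1 := hZsum (k + 1)
  have h2 := hZsum k
  rw [Finset.sum_range_succ, h2] at h1
  show Z k = f (k + 1) - f k
  linarith
end

section
/- For every n ≥ 1 and every m with 0 ≤ m ≤ n, there is exactly one binary word A of length n and weight m which is both Sturmian (any two factors of A of equal length have weights differing by at most 1) and locally heavy (every nonempty prefix of A has average weight ≥ m/n). -/
/-- `B` is a factor of the finite word `A`. -/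
def ListFactor (B A : List ℕ) : Prop :=
  ∃ j : ℕ, B = (A.drop j).take B.length

/-- A finite binary word is Sturmian if any two of its factors of equal length have weights
differing by at most 1. -/
def SturmianWord (A : List ℕ) : Prop :=
  ∀ B C : List ℕ, ListFactor B A → ListFactor C A → B.length = C.length →
    |(B.sum : ℤ) - (C.sum : ℤ)| ≤ 1

/-- A word is locally heavy if every nonempty prefix has average weight at least the
average weight of the whole word. -/
def LocallyHeavyWord (A : List ℕ) : Prop :=
  ∀ i : ℕ, 1 ≤ i → i ≤ A.length → (A.sum : ℝ) / A.length ≤ ((A.take i).sum : ℝ) / i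

namespace UHS

/-- ceiling of `i*m/n`. -/
def c (n m i : ℕ) : ℕ := (i * m + n - 1) / n

variable {n m : ℕ}


lemma c_spec (n m : ℕ) (hn : 1 ≤ n) (i : ℕ) :
    i * m ≤ n * c n m i ∧ n * c n m i < i * m + n := by
  obtain ⟨k, rfl⟩ : ∃ k, n = k + 1 := ⟨n - 1, by omega⟩
  have hx : i * m + (k + 1) - 1 = i * m + k := by omega
  have h1 := Nat.div_add_mod (i * m + k) (k + 1)
  have h2 : (i * m + k) % (k + 1) ≤ k := Nat.lt_succ_iff.mp (Nat.mod_lt _ (by omega))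
  unfold c
  rw [hx]
  constructor <;> linarith [Nat.zero_le ((i * m + k) % (k + 1))]

lemma c_min (hn : 1 ≤ n) {i k : ℕ} (h : i * m ≤ n * k) : c n m i ≤ k := by
  have h2 := (c_spec n m hn i).2
  have h3 : n * c n m i < n * (k + 1) := by
    have : n * (k + 1) = n * k + n := by ring
    linarith
  exact Nat.lt_succ_iff.mp (Nat.lt_of_mul_lt_mul_left h3)

lemma c_zero (hn : 1 ≤ n) : c n m 0 = 0 :=
  Nat.le_zero.mp (c_min hn (by simp))

lemma c_n (hn : 1 ≤ n) : c n m n = m := by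
  have h1 := (c_spec n m hn n).1
  have h2 : c n m n ≤ m := c_min hn (by rw [mul_comm])
  have h3 : m ≤ c n m n := Nat.le_of_mul_le_mul_left (by rw [mul_comm n m] at h1 ⊢; exact h1) hn
  omega

lemma c_mono (hn : 1 ≤ n) {i j : ℕ} (h : i ≤ j) : c n m i ≤ c n m j := by
  have h1 := (c_spec n m hn j).1
  exact c_min hn (le_trans (Nat.mul_le_mul_right m h) h1)

lemma c_succ_le (hn : 1 ≤ n) (hm : m ≤ n) (i : ℕ) : c n m (i + 1) ≤ c n m i + 1 := by
  have h1 := (c_spec n m hn i).1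
  apply c_min hn
  have : (i + 1) * m = i * m + m := by ring
  have h2 : n * (c n m i + 1) = n * c n m i + n := by ring
  linarith

lemma c_add_le (hn : 1 ≤ n) (a b : ℕ) : c n m (a + b) ≤ c n m a + c n m b := by
  have ha := (c_spec n m hn a).1
  have hb := (c_spec n m hn b).1
  apply c_min hn
  have h1 : (a + b) * m = a * m + b * m := by ring
  have h2 : n * (c n m a + c n m b) = n * c n m a + n * c n m b := by ring
  linarith

lemma c_add_ge (hn : 1 ≤ n) (a b : ℕ) : c n m a + c n m b ≤ c n m (a + b) + 1 := by
  have ha := (c_spec n m hn a).2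
  have hb := (c_spec n m hn b).2
  have hab := (c_spec n m hn (a + b)).1
  have h3 : n * (c n m a + c n m b) < n * (c n m (a + b) + 2) := by
    have e1 : n * (c n m a + c n m b) = n * c n m a + n * c n m b := by ring
    have e2 : n * (c n m (a + b) + 2) = n * c n m (a + b) + n + n := by ring
    have e3 : (a + b) * m = a * m + b * m := by ring
    linarith
  have := Nat.lt_of_mul_lt_mul_left h3
  omega

lemma c_dvd (hn : 1 ≤ n) {i : ℕ} (h : n ∣ i * m) : n * c n m i = i * m := by
  obtain ⟨t, ht⟩ := h
  have h1 := (c_spec n m hn i).1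
  have h2 := (c_spec n m hn i).2
  rw [ht] at h1 h2 ⊢
  have ht1 : t ≤ c n m i := Nat.le_of_mul_le_mul_left h1 hn
  have ht2 : c n m i < t + 1 := by
    apply Nat.lt_of_mul_lt_mul_left (a := n)
    have e : n * (t + 1) = n * t + n := by ring
    linarith
  have : c n m i = t := by omega
  rw [this]

lemma c_not_dvd (hn : 1 ≤ n) {i : ℕ} (h : ¬ n ∣ i * m) : i * m + 1 ≤ n * c n m i := by
  have h1 := (c_spec n m hn i).1
  rcases Nat.eq_or_lt_of_le h1 with he | hl
  · exact absurd ⟨c n m i, he⟩ h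
  · omega

lemma c_compl (hn : 1 ≤ n) {j : ℕ} (hj : j ≤ n) :
    m ≤ c n m j + c n m (n - j) ∧ (¬ n ∣ j * m → m + 1 ≤ c n m j + c n m (n - j)) := by
  have key : j * m + (n - j) * m = n * m := by
    rw [← Nat.add_mul]
    congr 1
    omega
  have h1 := (c_spec n m hn j).1
  have h2 := (c_spec n m hn (n - j)).1
  constructor
  · have h3 : n * m ≤ n * (c n m j + c n m (n - j)) := by
      have : n * (c n m j + c n m (n - j)) = n * c n m j + n * c n m (n - j) := by ring
      linarith
    exact Nat.le_of_mul_le_mul_left h3 hn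
  · intro hnd
    have h1' := c_not_dvd hn hnd
    have h3 : n * m < n * (c n m j + c n m (n - j)) := by
      have : n * (c n m j + c n m (n - j)) = n * c n m j + n * c n m (n - j) := by ring
      linarith
    exact Nat.lt_of_mul_lt_mul_left h3

lemma dvd_n'_of (hn : 1 ≤ n) {j : ℕ} (h : n ∣ j * m) : (n / Nat.gcd m n) ∣ j := by
  set d := Nat.gcd m n with hd
  have hdpos : 0 < d := Nat.gcd_pos_of_pos_right m hn
  have hdn : n / d * d = n := Nat.div_mul_cancel (Nat.gcd_dvd_right m n)
  have hdm : m / d * d = m := Nat.div_mul_cancel (Nat.gcd_dvd_left m n)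
  have hcop : Nat.Coprime (n / d) (m / d) := (Nat.coprime_div_gcd_div_gcd hdpos).symm
  apply hcop.dvd_of_dvd_mul_right
  have h2 : (n / d) * d ∣ (j * (m / d)) * d := by
    rw [hdn]
    calc n ∣ j * m := h
    _ = j * (m / d) * d := by rw [mul_assoc, hdm]
  exact (Nat.mul_dvd_mul_iff_right hdpos).mp h2

lemma c_step_dvd (hn : 1 ≤ n) {t : ℕ} (ht : (n / Nat.gcd m n) ∣ t) :
    c n m (t + n / Nat.gcd m n) = c n m t + m / Nat.gcd m n := by
  set d := Nat.gcd m n with hd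
  set n' := n / d with hn'
  set m' := m / d with hm'
  have hdpos : 0 < d := Nat.gcd_pos_of_pos_right m hn
  have hdn : n' * d = n := Nat.div_mul_cancel (Nat.gcd_dvd_right m n)
  have hdm : m' * d = m := Nat.div_mul_cancel (Nat.gcd_dvd_left m n)
  have key : ∀ s : ℕ, n' ∣ s → n * c n m s = s * m := by
    intro s hs
    apply c_dvd hn
    obtain ⟨k, rfl⟩ := hs
    refine ⟨k * m', ?_⟩
    rw [← hdn, ← hdm]
    ring
  have e1 := key t ht
  have e2 := key (t + n') (by exact Dvd.dvd.add ht dvd_rfl)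
  have e3 : n' * m = n * m' := by rw [← hdn, ← hdm]; ring
  have : n * c n m (t + n') = n * (c n m t + m') := by
    have : (t + n') * m = t * m + n' * m := by ring
    have h4 : n * (c n m t + m') = n * c n m t + n * m' := by ring
    linarith
  exact Nat.eq_of_mul_eq_mul_left hn this



/-- The upper mechanical (Christoffel-like) word. -/
def W (n m : ℕ) : List ℕ := List.ofFn (fun i : Fin n => c n m (i + 1) - c n m i)

lemma W_length : (W n m).length = n := by simp [W]

lemma W_take_sum (hn : 1 ≤ n) (hm : m ≤ n) : ∀ i ≤ n, ((W n m).take i).sum = c n m i := by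
  intro i hi
  induction i with
  | zero => simp [c_zero hn]
  | succ k ih =>
    have hk' : k < (W n m).length := by rw [W_length]; omega
    rw [List.sum_take_succ _ _ hk', ih (by omega)]
    have hg : (W n m)[k] = c n m (k + 1) - c n m k := by
      simp [W]
    rw [hg]
    have h1 := c_mono (m := m) hn (Nat.le_succ k)
    simp only [Nat.succ_eq_add_one] at *
    omega

lemma W_sum (hn : 1 ≤ n) (hm : m ≤ n) : (W n m).sum = m := by
  have h := W_take_sum hn hm n le_rfl
  have e : (W n m).take n = W n m := by
    have := (List.take_length : (W n m).take (W n m).length = W n m)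
    rwa [W_length] at this
  rw [e] at h
  rw [h, c_n hn]

lemma W_binary (hn : 1 ≤ n) (hm : m ≤ n) : ∀ a ∈ W n m, a ≤ 1 := by
  intro a ha
  simp only [W, List.mem_ofFn] at ha
  obtain ⟨i, rfl⟩ := ha
  show c n m ((i : ℕ) + 1) - c n m (i : ℕ) ≤ 1
  have := c_succ_le hn hm (i : ℕ)
  omega

/-- structure of a factor. -/
lemma factor_window {A B : List ℕ} (hF : ListFactor B A) :
    B = [] ∨ ∃ j, j + B.length ≤ A.length ∧
      (A.take j).sum + B.sum = (A.take (j + B.length)).sum := by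
  obtain ⟨j, hB⟩ := hF
  by_cases h0 : B.length = 0
  · exact Or.inl (List.eq_nil_of_length_eq_zero h0)
  · right
    refine ⟨j, ?_, ?_⟩
    · have := congrArg List.length hB
      rw [List.length_take, List.length_drop] at this
      omega
    · rw [List.take_add, List.sum_append, ← hB]

lemma W_window_sum (hn : 1 ≤ n) (hm : m ≤ n) {j L : ℕ} (hjL : j + L ≤ n)
    {B : List ℕ} (hBL : B.length = L)
    (hsum : ((W n m).take j).sum + B.sum = ((W n m).take (j + L)).sum) :
    c n m L ≤ B.sum + 1 ∧ B.sum ≤ c n m L := by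
  rw [W_take_sum hn hm j (by omega), W_take_sum hn hm (j + L) (by omega)] at hsum
  have h1 := c_add_le (m := m) hn j L
  have h2 := c_add_ge (m := m) hn j L
  omega

lemma W_sturmian (hn : 1 ≤ n) (hm : m ≤ n) : SturmianWord (W n m) := by
  intro B C hB hC hBC
  have hBw := factor_window hB
  have hCw := factor_window hC
  rcases hBw with rfl | ⟨j, hj, hjs⟩
  · have : C = [] := List.eq_nil_of_length_eq_zero (by rw [← hBC]; rfl)
    subst this; simp
  · rcases hCw with rfl | ⟨k, hk, hks⟩
    · rw [List.length_nil] at hBC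
      have : B = [] := List.eq_nil_of_length_eq_zero hBC
      subst this; simp
    · rw [W_length] at hj hk
      have h1 := W_window_sum hn hm hj rfl hjs
      rw [← hBC] at hks hk
      have h2 := W_window_sum hn hm hk hBC.symm hks
      rw [abs_le]
      omega

lemma W_heavy (hn : 1 ≤ n) (hm : m ≤ n) : LocallyHeavyWord (W n m) := by
  intro i h1 hi
  rw [W_length] at hi
  rw [W_sum hn hm, W_length, W_take_sum hn hm i hi]
  rw [div_le_div_iff₀ (by exact_mod_cast hn) (by exact_mod_cast h1)]
  have key : m * i ≤ c n m i * n := by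
    have := (c_spec n m hn i).1
    calc m * i = i * m := by ring
    _ ≤ n * c n m i := this
    _ = c n m i * n := by ring
  exact_mod_cast key



section Uniqueness

variable {A : List ℕ}

lemma prefix_suffix (hn : 1 ≤ n) (hlen : A.length = n) (hst : SturmianWord A)
    {j : ℕ} (hj : j ≤ n) :
    (A.take j).sum + (A.take (n - j)).sum ≤ A.sum + 1 := by
  have hBlen : (A.take j).length = j := by
    rw [List.length_take, hlen]; omega
  have hfB : ListFactor (A.take j) A := ⟨0, by rw [List.drop_zero, hBlen]⟩
  have hClen : (A.drop (n - j)).length = j := by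
    rw [List.length_drop, hlen]; omega
  have hfC : ListFactor (A.drop (n - j)) A := ⟨n - j, (List.take_length).symm⟩
  have h := hst _ _ hfB hfC (by rw [hBlen, hClen])
  have hsum := List.sum_take_add_sum_drop A (n - j)
  rw [abs_le] at h
  omega

lemma prefix_ge (hn : 1 ≤ n) (hlen : A.length = n) (hsum : A.sum = m)
    (hlh : LocallyHeavyWord A) {j : ℕ} (hj : j ≤ n) :
    c n m j ≤ (A.take j).sum := by
  rcases Nat.eq_zero_or_pos j with rfl | hj1
  · simp [c_zero hn]
  · have h := hlh j hj1 (by rw [hlen]; exact hj)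
    rw [hlen, hsum] at h
    rw [div_le_div_iff₀ (show (0:ℝ) < n by exact_mod_cast hn)
      (show (0:ℝ) < j by exact_mod_cast hj1)] at h
    have h3 : m * j ≤ (A.take j).sum * n := by exact_mod_cast h
    apply c_min hn
    calc j * m = m * j := by ring
    _ ≤ (A.take j).sum * n := h3
    _ = n * (A.take j).sum := by ring

lemma prefix_cases (hn : 1 ≤ n) (hlen : A.length = n) (hsum : A.sum = m)
    (hst : SturmianWord A) (hlh : LocallyHeavyWord A) {j : ℕ} (hj : j ≤ n) :
    (A.take j).sum ≤ c n m j + 1 ∧ (¬ n ∣ j * m → (A.take j).sum = c n m j) := by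
  have h1 := prefix_ge hn hlen hsum hlh hj
  have h1' := prefix_ge hn hlen hsum hlh (j := n - j) (by omega)
  have h2 := prefix_suffix hn hlen hst hj
  have h3 := c_compl (m := m) hn hj
  rw [hsum] at h2
  constructor
  · omega
  · intro hd
    have h4 := h3.2 hd
    omega

lemma sums_eq (hn : 1 ≤ n) (hm : m ≤ n) (hlen : A.length = n) (hsum : A.sum = m)
    (hst : SturmianWord A) (hlh : LocallyHeavyWord A) :
    ∀ j ≤ n, (A.take j).sum = c n m j := by
  by_contra hcon
  push_neg at hcon
  classical
  set P : ℕ → Prop := fun j => j ≤ n ∧ (A.take j).sum = c n m j + 1 with hPdef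
  have hbad : ∃ j, P j := by
    obtain ⟨j, hj, hne⟩ := hcon
    have h1 := prefix_ge hn hlen hsum hlh hj
    have h2 := (prefix_cases hn hlen hsum hst hlh hj).1
    exact ⟨j, hj, by omega⟩
  -- notation
  have sn' : (A.take n).sum = m := by rw [← hlen, List.take_length, hsum]
  have hgood : ∀ j, j ≤ n → ¬ P j → (A.take j).sum = c n m j := by
    intro j hj hnp
    have h1 := prefix_ge hn hlen hsum hlh hj
    have h2 := (prefix_cases hn hlen hsum hst hlh hj).1
    have h3 : ¬ ((A.take j).sum = c n m j + 1) := fun h => hnp ⟨hj, h⟩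
    omega
  have hdvd : ∀ j, P j → (n / Nat.gcd m n) ∣ j := by
    intro j hj
    apply dvd_n'_of hn
    by_contra hnd
    have := (prefix_cases hn hlen hsum hst hlh hj.1).2 hnd
    have := hj.2
    omega
  have hn'pos : 0 < n / Nat.gcd m n :=
    Nat.div_pos (Nat.le_of_dvd (by omega) (Nat.gcd_dvd_right m n))
      (Nat.gcd_pos_of_pos_right m hn)
  have hn'n : (n / Nat.gcd m n) ∣ n := Nat.div_dvd_of_dvd (Nat.gcd_dvd_right m n)
  set n' := n / Nat.gcd m n with hn'def
  -- the minimal and maximal bad indices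
  let p := Nat.find hbad
  have hp : P p := Nat.find_spec hbad
  have hpmin : ∀ k, k < p → ¬ P k := fun k hk => Nat.find_min hbad hk
  let q := Nat.findGreatest P n
  have hq : P q := Nat.findGreatest_spec hp.1 hp
  have hqmax : ∀ k, q < k → k ≤ n → ¬ P k := fun k h1 h2 => Nat.findGreatest_is_greatest h1 h2
  have hppos : 0 < p := by
    by_contra h0
    have hp0 : p = 0 := by omega
    have h2 := hp.2
    rw [hp0] at h2
    simp [c_zero hn] at h2
  have hqn : q < n := by
    rcases Nat.lt_or_ge q n with h | h
    · exact h
    · exfalso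
      have hqn' : q = n := by have := hq.1; omega
      have := hq.2
      rw [hqn', sn', c_n hn] at this
      omega
  have np := hdvd p hp
  have nq := hdvd q hq
  have hn'p : n' ≤ p := Nat.le_of_dvd hppos np
  have hq'n : q + n' ≤ n := by
    have hd2 : n' ∣ (n - q) := Nat.dvd_sub hn'n nq
    have := Nat.le_of_dvd (by omega) hd2
    omega
  -- the c-step identities
  have hcp : c n m p = c n m (p - n') + m / Nat.gcd m n := by
    have h := c_step_dvd hn (t := p - n') (Nat.dvd_sub np dvd_rfl)
    rw [hn'def] at h  -- no-op, keep
    have hpp : p - n' + n' = p := by omega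
    rw [hpp] at h
    exact h
  have hcq : c n m (q + n') = c n m q + m / Nat.gcd m n := c_step_dvd hn nq
  -- window sum identities
  have w1eq : (A.take (p - n')).sum + ((A.drop (p - n')).take n').sum
      = (A.take p).sum := by
    conv_rhs => rw [show p = (p - n') + n' from by omega]
    rw [List.take_add, List.sum_append]
  have w2eq : (A.take q).sum + ((A.drop q).take n').sum = (A.take (q + n')).sum := by
    rw [List.take_add, List.sum_append]
  -- factors
  have hlen1 : ((A.drop (p - n')).take n').length = n' := by
    rw [List.length_take, List.length_drop, hlen]; omega
  have hlen2 : ((A.drop q).take n').length = n' := by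
    rw [List.length_take, List.length_drop, hlen]; omega
  have hf1 : ListFactor ((A.drop (p - n')).take n') A := ⟨p - n', by rw [hlen1]⟩
  have hf2 : ListFactor ((A.drop q).take n') A := ⟨q, by rw [hlen2]⟩
  have hstur := hst _ _ hf1 hf2 (by rw [hlen1, hlen2])
  rw [abs_le] at hstur
  -- the values of the prefix sums at the four points
  have sp := hp.2
  have sp' : (A.take (p - n')).sum = c n m (p - n') :=
    hgood _ (by omega) (hpmin _ (by omega))
  have sq := hq.2
  have sq' : (A.take (q + n')).sum = c n m (q + n') :=
    hgood _ hq'n (hqmax _ (by omega) hq'n)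
  omega

lemma words_eq (hn : 1 ≤ n) (hm : m ≤ n) (hlen : A.length = n) (hsum : A.sum = m)
    (hst : SturmianWord A) (hlh : LocallyHeavyWord A) : A = W n m := by
  have hs := sums_eq hn hm hlen hsum hst hlh
  apply List.ext_getElem (by rw [hlen, W_length])
  intro i h1 h2
  have h1' : i < n := by rw [hlen] at h1; exact h1
  have hA := List.sum_take_succ A i h1
  have hW := List.sum_take_succ (W n m) i h2
  rw [hs (i + 1) (by omega), hs i (by omega)] at hA
  rw [W_take_sum hn hm (i + 1) (by omega), W_take_sum hn hm i (by omega)] at hW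
  omega

end Uniqueness

end UHS

/-- For every `n ≥ 1` and `m ≤ n` there is exactly one binary word of
length `n` and weight `m` which is both Sturmian and locally heavy. -/
theorem unique_heavy_sturmian_word (n m : ℕ) (hn : 1 ≤ n) (hm : m ≤ n) :
    ∃! A : List ℕ, A.length = n ∧ A.sum = m ∧ (∀ a ∈ A, a ≤ 1) ∧
      SturmianWord A ∧ LocallyHeavyWord A := by
  refine ⟨UHS.W n m, ⟨UHS.W_length, UHS.W_sum hn hm, UHS.W_binary hn hm,
    UHS.W_sturmian hn hm, UHS.W_heavy hn hm⟩, ?_⟩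
  rintro A ⟨h1, h2, h3, h4, h5⟩
  exact UHS.words_eq hn hm h1 h2 h4 h5
end

section
/- Let X : ℕ → {0,1} be a Sturmian sequence which contains at least two indices with value 1 and at least two indices with value 0, and let N = max{n : the constant word 1^n or 0^n is a factor of X} (which is finite under these hypotheses). Then for every n with 1 ≤ n ≤ N, X has exactly two distinct locally heavy factors of length n, and for every n > N, X has at most one locally heavy factor of length n. -/
/-- `A` is a factor of the sequence `X : ℕ → ℕ`. -/
def SeqFactor (A : List ℕ) (X : ℕ → ℕ) : Prop :=
  ∃ j : ℕ, A = (List.range A.length).map fun i => X (j + i)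

namespace StHelper

/-- the window of `X` at position `j` of length `m` -/
def win (X : ℕ → ℕ) (j m : ℕ) : List ℕ := (List.range m).map fun i => X (j + i)

/-- prefix sums -/
def sg (X : ℕ → ℕ) (j m : ℕ) : ℕ := ∑ i ∈ Finset.range m, X (j + i)

@[simp] lemma len_win (X : ℕ → ℕ) (j m : ℕ) : (win X j m).length = m := by
  simp [win]

@[simp] lemma sum_win (X : ℕ → ℕ) (j m : ℕ) : (win X j m).sum = sg X j m := by
  unfold win sg
  induction m with
  | zero => simp
  | succ n ih => rw [List.range_succ, Finset.sum_range_succ, ← ih]; simp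

lemma take_win (X : ℕ → ℕ) (j : ℕ) {i m : ℕ} (h : i ≤ m) :
    (win X j m).take i = win X j i := by
  unfold win
  rw [← List.map_take, List.take_range, min_eq_left h]

lemma factor_win (X : ℕ → ℕ) (j m : ℕ) : SeqFactor (win X j m) X :=
  ⟨j, by rw [len_win]; rfl⟩

lemma factor_ex {A : List ℕ} {X : ℕ → ℕ} (h : SeqFactor A X) :
    ∃ j, A = win X j A.length := h

lemma sg_add (X : ℕ → ℕ) (j a b : ℕ) : sg X j (a + b) = sg X j a + sg X (j + a) b := by
  unfold sg
  rw [Finset.sum_range_add]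
  congr 1
  exact Finset.sum_congr rfl fun i _ => by ring_nf

lemma sg_succ (X : ℕ → ℕ) (j m : ℕ) : sg X j (m + 1) = sg X j m + X (j + m) := by
  rw [sg_add]; simp [sg]

lemma sg_mono (X : ℕ → ℕ) (j : ℕ) {a b : ℕ} (h : a ≤ b) : sg X j a ≤ sg X j b := by
  obtain ⟨c, rfl⟩ := Nat.exists_eq_add_of_le h
  rw [sg_add]; omega

lemma sg_le (X : ℕ → ℕ) (hX : ∀ i, X i = 0 ∨ X i = 1) (j m : ℕ) : sg X j m ≤ m := by
  induction m with
  | zero => simp [sg]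
  | succ n ih => rw [sg_succ]; rcases hX (j + n) with h | h <;> omega

section
variable {X : ℕ → ℕ}

lemma bal (hSturm : ∀ A B : List ℕ, SeqFactor A X → SeqFactor B X → A.length = B.length →
      |(A.sum : ℤ) - (B.sum : ℤ)| ≤ 1) (j k m : ℕ) : sg X j m ≤ sg X k m + 1 := by
  have := hSturm (win X j m) (win X k m) (factor_win X j m) (factor_win X k m) (by simp)
  rw [sum_win, sum_win, abs_le] at this
  omega

lemma LH_iff (j n : ℕ) : LocallyHeavyWord (win X j n) ↔
    ∀ i, 1 ≤ i → i ≤ n → sg X j n * i ≤ sg X j i * n := by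
  constructor
  · intro h i h1 hi
    have h' := h i h1 (by simpa using hi)
    rw [take_win X j hi, sum_win, sum_win, len_win] at h'
    have hn : (0:ℝ) < (n:ℝ) := by exact_mod_cast Nat.lt_of_lt_of_le h1 hi
    have hi' : (0:ℝ) < (i:ℝ) := by exact_mod_cast h1
    rw [div_le_div_iff₀ hn hi'] at h'
    exact_mod_cast h'
  · intro h i h1 hi
    rw [len_win] at hi
    rw [take_win X j hi, sum_win, sum_win, len_win]
    have hn : (0:ℝ) < (n:ℝ) := by exact_mod_cast Nat.lt_of_lt_of_le h1 hi
    have hi' : (0:ℝ) < (i:ℝ) := by exact_mod_cast h1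
    rw [div_le_div_iff₀ hn hi']
    exact_mod_cast h i h1 hi

lemma words_eq {a b n : ℕ} (h : ∀ m, m ≤ n → sg X a m = sg X b m) :
    win X a n = win X b n := by
  apply List.ext_getElem (by simp)
  intro i h1 h2
  simp only [win, List.getElem_map, List.getElem_range]
  simp only [len_win] at h1
  have e1 := h i (le_of_lt h1)
  have e2 := h (i+1) h1
  rw [sg_succ, sg_succ] at e2
  omega
end

section
variable {X : ℕ → ℕ}

/-- lower pin: locally heavy in integer form, including `m = 0`. -/
lemma pinL {c n : ℕ} (lh : LocallyHeavyWord (win X c n)) :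
    ∀ m, m ≤ n → sg X c n * m ≤ sg X c m * n := by
  intro m hm
  rcases Nat.eq_zero_or_pos m with rfl | hm0
  · simp
  · exact (LH_iff c n).1 lh m hm0 hm

lemma pinU (hSturm : ∀ A B : List ℕ, SeqFactor A X → SeqFactor B X → A.length = B.length →
      |(A.sum : ℤ) - (B.sum : ℤ)| ≤ 1)
    {c n : ℕ} (lh : LocallyHeavyWord (win X c n)) :
    ∀ m, m ≤ n → sg X c m * n ≤ sg X c n * m + n := by
  intro m hm
  obtain ⟨k, rfl⟩ := Nat.exists_eq_add_of_le hm
  have hsplit : sg X c (k + m) = sg X c k + sg X (c + k) m := sg_add X c k m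
  have hsplit' : sg X c (m + k) = sg X c (k + m) := by rw [Nat.add_comm]
  have hb : sg X c m ≤ sg X (c + k) m + 1 := bal hSturm _ _ _
  have hL : sg X c (m + k) * k ≤ sg X c k * (m + k) := pinL lh k (by omega)
  set T := sg X c (m + k) with hT
  set u := sg X c k
  set v := sg X (c + k) m
  set s := sg X c m
  have e1 : T = u + v := by rw [hsplit'] at *; omega
  have e2 : s * (m + k) ≤ (v + 1) * (m + k) := Nat.mul_le_mul_right _ hb
  have e3 : (v + 1) * (m + k) = v * (m+k) + (m + k) := by ring
  have e4 : v * (m + k) + u * (m + k) = T * (m + k) := by rw [e1]; ring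
  have e5 : T * (m + k) = T * m + T * k := by ring
  omega
end

section
variable {X : ℕ → ℕ}
  (hSturm : ∀ A B : List ℕ, SeqFactor A X → SeqFactor B X → A.length = B.length →
      |(A.sum : ℤ) - (B.sum : ℤ)| ≤ 1)

@[simp] lemma sg_zero (c : ℕ) : sg X c 0 = 0 := by simp [sg]

include hSturm in
/-- dichotomy at resonant points -/
lemma dicho {c n : ℕ} (lh : LocallyHeavyWord (win X c n)) {m : ℕ} (hm : m ≤ n)
    (hd : n ∣ sg X c n * m) (hn : 1 ≤ n) :
    sg X c m * n = sg X c n * m ∨ sg X c m * n = sg X c n * m + n := by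
  obtain ⟨u, hu⟩ := hd
  have h1 := pinL lh m hm
  have h2 := pinU hSturm lh m hm
  rw [hu] at h1 h2 ⊢
  have l1 : u ≤ sg X c m := Nat.le_of_mul_le_mul_left (by linarith [h1]) hn
  have l2 : sg X c m ≤ u + 1 := Nat.le_of_mul_le_mul_left
    (by nlinarith [h2]) hn
  rcases Nat.le_and_le_add_one_iff.mp ⟨l1, l2⟩ with h | h <;> rw [h]
  · left; ring
  · right; ring

include hSturm in
lemma noBump {c n T : ℕ} (lh : LocallyHeavyWord (win X c n)) (hn : 1 ≤ n)
    (hT : sg X c n = T) :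
    ∀ m, m ≤ n → n ∣ T * m → sg X c m * n = T * m := by
  by_contra hcon
  push_neg at hcon
  obtain ⟨m', hm', hd', hne'⟩ := hcon
  classical
  have dich : ∀ m, m ≤ n → n ∣ T * m → sg X c m * n = T * m ∨ sg X c m * n = T * m + n := by
    intro m h1 h2
    have := dicho hSturm lh h1 (by rw [hT]; exact h2) hn
    rw [hT] at this
    exact this
  have hP : ∃ m, m ≤ n ∧ n ∣ T * m ∧ sg X c m * n = T * m + n := by
    refine ⟨m', hm', hd', ?_⟩
    rcases dich m' hm' hd' with h | h
    · exact absurd h hne'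
    · exact h
  obtain ⟨m₀, ⟨hm₀n, hm₀d, hm₀b⟩, hm₀min⟩ :
      ∃ m, (m ≤ n ∧ n ∣ T * m ∧ sg X c m * n = T * m + n) ∧
        ∀ k, k < m → ¬ (k ≤ n ∧ n ∣ T * k ∧ sg X c k * n = T * k + n) :=
    ⟨Nat.find hP, Nat.find_spec hP, fun k hk => Nat.find_min hP hk⟩
  obtain ⟨m₂, ⟨hm₂n, hm₂d, hm₂b⟩, hm₂max⟩ :
      ∃ m, (m ≤ n ∧ n ∣ T * m ∧ sg X c m * n = T * m + n) ∧
        ∀ k, m < k → k ≤ n → ¬ (k ≤ n ∧ n ∣ T * k ∧ sg X c k * n = T * k + n) := by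
    refine ⟨Nat.findGreatest (fun m => m ≤ n ∧ n ∣ T * m ∧ sg X c m * n = T * m + n) n,
      Nat.findGreatest_spec (P := fun m => m ≤ n ∧ n ∣ T * m ∧ sg X c m * n = T * m + n)
        hm₀n ⟨hm₀n, hm₀d, hm₀b⟩, fun k h1 h2 => ?_⟩
    exact Nat.findGreatest_is_greatest h1 h2
  obtain ⟨q, ⟨hq0, hqd⟩, hqmin⟩ :
      ∃ q, (0 < q ∧ n ∣ T * q) ∧ ∀ r, r < q → ¬ (0 < r ∧ n ∣ T * r) := by
    have hQ : ∃ q, 0 < q ∧ n ∣ T * q := ⟨n, hn, dvd_mul_left n T⟩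
    exact ⟨Nat.find hQ, Nat.find_spec hQ, fun r hr => Nat.find_min hQ hr⟩
  have qmin : ∀ r, 0 < r → n ∣ T * r → q ≤ r := by
    intro r h1 h2
    by_contra h3
    exact hqmin r (by omega) ⟨h1, h2⟩
  -- T ≥ 1
  have hT1 : 1 ≤ T := by
    by_contra hT0
    have hz : T = 0 := by omega
    have h1 : sg X c m₀ ≤ T := hT ▸ sg_mono X c hm₀n
    have h2 : sg X c m₀ = 0 := by omega
    rw [hz, h2] at hm₀b
    simp at hm₀b
    omega
  -- m₀ ≥ q ≥ 1
  have hm₀pos : 0 < m₀ := by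
    by_contra h
    have h0 : m₀ = 0 := by omega
    rw [h0] at hm₀b
    simp at hm₀b
    omega
  have hqm₀ : q ≤ m₀ := qmin m₀ hm₀pos hm₀d
  obtain ⟨p, hp⟩ := hqd
  have hp1 : 1 ≤ p := by
    rcases Nat.eq_zero_or_pos p with h | h
    · rw [h, Nat.mul_zero] at hp
      have : 0 < T * q := Nat.mul_pos hT1 hq0
      omega
    · exact h
  -- the point m₀ - q is resonant and unbumped
  have hm₁q : (m₀ - q) + q = m₀ := by omega
  have hm₁d : n ∣ T * (m₀ - q) := by
    have e : T * m₀ = T * (m₀ - q) + T * q := by rw [← Nat.mul_add, hm₁q]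
    have e2 : T * (m₀ - q) = T * m₀ - T * q := by omega
    rw [e2]
    exact Nat.dvd_sub hm₀d ⟨p, hp⟩
  have hm₁nb : sg X c (m₀ - q) * n = T * (m₀ - q) := by
    have hnP := hm₀min (m₀ - q) (by omega)
    rcases dich (m₀ - q) (by omega) hm₁d with h | h
    · exact h
    · exact absurd ⟨by omega, hm₁d, h⟩ hnP
  -- first window has sum p + 1
  have hs1 : sg X (c + (m₀ - q)) q = p + 1 := by
    have hadd : sg X c m₀ = sg X c (m₀ - q) + sg X (c + (m₀ - q)) q := by
      conv_lhs => rw [← hm₁q]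
      exact sg_add X c (m₀ - q) q
    have key : sg X (c + (m₀ - q)) q * n = (p + 1) * n := by
      have e : T * m₀ = T * (m₀ - q) + T * q := by rw [← Nat.mul_add, hm₁q]
      have e2 : (sg X c (m₀ - q) + sg X (c + (m₀ - q)) q) * n
          = sg X c (m₀ - q) * n + sg X (c + (m₀ - q)) q * n := by ring
      have e3 : (p + 1) * n = p * n + n := by ring
      have e4 : T * q = n * p := hp
      have e5 : sg X c m₀ * n = (sg X c (m₀ - q) + sg X (c + (m₀ - q)) q) * n := by rw [← hadd]
      have e6 : n * p = p * n := by ring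
      omega
    exact Nat.eq_of_mul_eq_mul_right hn key
  -- m₂ < n and m₂ + q ≤ n
  have hm₂lt : m₂ < n := by
    rcases Nat.lt_or_ge m₂ n with h | h
    · exact h
    · exfalso
      have he : m₂ = n := by omega
      rw [he, hT] at hm₂b
      have : T * n = n * T := by ring
      omega
  have hm₂q : m₂ + q ≤ n := by
    by_contra hcon2
    have hr : 0 < n - m₂ := by omega
    have hrd : n ∣ T * (n - m₂) := by
      have e : T * n = T * m₂ + T * (n - m₂) := by rw [← Nat.mul_add]; congr 1; omega
      have e2 : T * (n - m₂) = T * n - T * m₂ := by omega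
      rw [e2]
      exact Nat.dvd_sub (dvd_mul_left n T) hm₂d
    have := qmin (n - m₂) hr hrd
    omega
  have hm₂qd : n ∣ T * (m₂ + q) := by
    rw [Nat.mul_add]
    exact Nat.dvd_add hm₂d ⟨p, hp⟩
  have hm₂qnb : sg X c (m₂ + q) * n = T * (m₂ + q) := by
    have hnP := hm₂max (m₂ + q) (by omega) hm₂q
    rcases dich (m₂ + q) hm₂q hm₂qd with h | h
    · exact h
    · exact absurd ⟨hm₂q, hm₂qd, h⟩ hnP
  -- second window has sum p - 1
  have hs2 : sg X (c + m₂) q + 1 = p := by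
    have hadd : sg X c (m₂ + q) = sg X c m₂ + sg X (c + m₂) q := sg_add X c m₂ q
    have key : (sg X (c + m₂) q + 1) * n = p * n := by
      have e : T * (m₂ + q) = T * m₂ + T * q := by ring
      have e2 : (sg X c m₂ + sg X (c + m₂) q) * n
          = sg X c m₂ * n + sg X (c + m₂) q * n := by ring
      have e3 : (sg X (c + m₂) q + 1) * n = sg X (c + m₂) q * n + n := by ring
      have e4 : T * q = n * p := hp
      have e5 : sg X c (m₂ + q) * n = (sg X c m₂ + sg X (c + m₂) q) * n := by rw [← hadd]
      have e6 : n * p = p * n := by ring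
      omega
    exact Nat.eq_of_mul_eq_mul_right hn key
  have := bal hSturm (c + (m₀ - q)) (c + m₂) q
  omega

include hSturm in
/-- two locally heavy factors with the same length and sum are equal -/
lemma LH_unique {a b n : ℕ} (hn : 1 ≤ n)
    (lha : LocallyHeavyWord (win X a n)) (lhb : LocallyHeavyWord (win X b n))
    (hsum : sg X a n = sg X b n) : win X a n = win X b n := by
  apply words_eq
  intro m hm
  have pLa := pinL lha m hm
  have pUa := pinU hSturm lha m hm
  have pLb := pinL lhb m hm
  have pUb := pinU hSturm lhb m hm
  rw [hsum] at pLa pUa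
  rcases Nat.lt_trichotomy (sg X a m) (sg X b m) with h | h | h
  · exfalso
    have h1 : (sg X a m + 1) * n ≤ sg X b m * n := Nat.mul_le_mul_right _ (by omega)
    have h2 : (sg X a m + 1) * n = sg X a m * n + n := by ring
    have heq : sg X a m * n = sg X b n * m := by omega
    have hd : n ∣ sg X b n * m := ⟨sg X a m, by rw [← heq]; ring⟩
    have nba := noBump hSturm lha hn hsum m hm hd
    have nbb := noBump hSturm lhb hn rfl m hm hd
    have : sg X a m * n = sg X b m * n := by omega
    have := Nat.eq_of_mul_eq_mul_right hn this
    omega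
  · exact h
  · exfalso
    have h1 : (sg X b m + 1) * n ≤ sg X a m * n := Nat.mul_le_mul_right _ (by omega)
    have h2 : (sg X b m + 1) * n = sg X b m * n + n := by ring
    have heq : sg X b m * n = sg X b n * m := by omega
    have hd : n ∣ sg X b n * m := ⟨sg X b m, by rw [← heq]; ring⟩
    have nba := noBump hSturm lha hn hsum m hm hd
    have nbb := noBump hSturm lhb hn rfl m hm hd
    have : sg X a m * n = sg X b m * n := by omega
    have := Nat.eq_of_mul_eq_mul_right hn this
    omega

omit hSturm

@[simp] lemma sg_one (j : ℕ) : sg X j 1 = X (j + 0) := by simp [sg]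

lemma sg_of_ones {j m : ℕ} (h : ∀ i, i < m → X (j + i) = 1) : sg X j m = m := by
  unfold sg
  rw [Finset.sum_congr rfl (fun i hi => h i (Finset.mem_range.1 hi))]
  simp

lemma sg_of_zeros {j m : ℕ} (h : ∀ i, i < m → X (j + i) = 0) : sg X j m = 0 := by
  unfold sg
  rw [Finset.sum_congr rfl (fun i hi => h i (Finset.mem_range.1 hi))]
  simp

lemma win_eq_replicate {j n v : ℕ} (h : ∀ i, i < n → X (j + i) = v) :
    win X j n = List.replicate n v := by
  apply List.ext_getElem (by simp)
  intro i h1 h2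
  simp only [win, List.getElem_map, List.getElem_range, List.getElem_replicate]
  simp only [len_win] at h1
  exact h i h1

lemma factor_replicate {j n v : ℕ} (h : ∀ i, i < n → X (j + i) = v) :
    SeqFactor (List.replicate n v) X := by
  have := factor_win X j n
  rwa [win_eq_replicate h] at this

lemma entries_one (hX : ∀ i, X i = 0 ∨ X i = 1) {j n : ℕ} (h : sg X j n = n) :
    ∀ i, i < n → X (j + i) = 1 := by
  induction n with
  | zero => omega
  | succ m ih =>
    rw [sg_succ] at h
    have h1 : sg X j m ≤ m := sg_le X hX j m
    have h2 : X (j + m) ≤ 1 := by rcases hX (j + m) with h' | h' <;> omega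
    have h3 : sg X j m = m ∧ X (j + m) = 1 := by omega
    intro i hi
    rcases Nat.lt_or_ge i m with h' | h'
    · exact ih h3.1 i h'
    · have : i = m := by omega
      rw [this]; exact h3.2

lemma entries_zero {j n : ℕ} (h : sg X j n = 0) :
    ∀ i, i < n → X (j + i) = 0 := by
  intro i hi
  have h1 : sg X j (i + 1) = sg X j i + X (j + i) := sg_succ X j i
  have h2 : sg X j (i + 1) ≤ sg X j n := sg_mono X j (by omega)
  omega

include hSturm in
/-- for `n > N`, two locally heavy factors cannot have sums differing by one -/
lemma no_diff_sums (hX : ∀ i, X i = 0 ∨ X i = 1) {N : ℕ}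
    (hN2 : ∀ n : ℕ, (SeqFactor (List.replicate n 1) X ∨ SeqFactor (List.replicate n 0) X) → n ≤ N)
    {a b n : ℕ} (hn : N < n) (hn2 : 2 ≤ n)
    (lha : LocallyHeavyWord (win X a n)) (lhb : LocallyHeavyWord (win X b n))
    (hsum : sg X a n = sg X b n + 1) : False := by
  have hSb1 : 1 ≤ sg X b n := by
    by_contra h
    have h0 : sg X b n = 0 := by omega
    have := hN2 n (Or.inr (factor_replicate (entries_zero h0)))
    omega
  have hXb : X (b + 0) = 1 := by
    have h1 := pinL lhb 1 (by omega)
    rw [sg_one] at h1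
    rcases hX (b + 0) with h' | h' <;> [skip; exact h']
    rw [h'] at h1
    omega
  have hsplitb : sg X b n = X (b + 0) + sg X (b + 1) (n - 1) := by
    have : sg X b (1 + (n - 1)) = sg X b 1 + sg X (b + 1) (n - 1) := sg_add X b 1 (n - 1)
    rw [show 1 + (n - 1) = n by omega] at this
    rw [this, sg_one]
  have hsplita : sg X a n = sg X a (n - 1) + X (a + (n - 1)) := by
    have := sg_succ X a (n - 1)
    rw [show n - 1 + 1 = n by omega] at this
    exact this
  have hbal := bal hSturm a (b + 1) (n - 1)
  have hXa : X (a + (n - 1)) = 1 := by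
    rcases hX (a + (n - 1)) with h' | h'
    · omega
    · exact h'
  have hsa : sg X a (n - 1) = sg X b n := by omega
  have hL := pinL lha (n - 1) (by omega)
  rw [hsa] at hL
  -- (sg X b n + 1) * (n-1) ≤ sg X b n * n  ⇒  n - 1 ≤ sg X b n
  rw [hsum] at hL
  have hSbn : n - 1 ≤ sg X b n := by
    zify [show 1 ≤ n from by omega] at hL ⊢
    nlinarith [hL]
  have hna : sg X a n = n := by
    have := sg_le X hX a n
    omega
  have := hN2 n (Or.inl (factor_replicate (entries_one hX hna)))
  omega

lemma replicate_entries {j n v : ℕ} (h : win X j n = List.replicate n v) :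
    ∀ i, i < n → X (j + i) = v := by
  intro i hi
  have hm : X (j + i) ∈ win X j n := by
    simp only [win, List.mem_map, List.mem_range]
    exact ⟨i, hi, rfl⟩
  rw [h] at hm
  exact List.eq_of_mem_replicate hm

lemma factor_replicate_ex {n v : ℕ} (h : SeqFactor (List.replicate n v) X) :
    ∃ j, ∀ i, i < n → X (j + i) = v := by
  obtain ⟨j, hj⟩ := h
  rw [List.length_replicate] at hj
  exact ⟨j, replicate_entries hj.symm⟩

lemma factor_to_win {A : List ℕ} {n : ℕ} (h : SeqFactor A X) (hl : A.length = n) :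
    ∃ c, A = win X c n := by
  obtain ⟨c, hc⟩ := h
  rw [hl] at hc
  exact ⟨c, hc⟩

include hSturm in
lemma part_one_ones (hX : ∀ i, X i = 0 ∨ X i = 1) {N : ℕ}
    (hN2 : ∀ n : ℕ, (SeqFactor (List.replicate n 1) X ∨ SeqFactor (List.replicate n 0) X) → n ≤ N)
    {j : ℕ} (hj : ∀ i, i < N → X (j + i) = 1) {n : ℕ} (h1 : 1 ≤ n) (h2 : n ≤ N) :
    ∃ A B : List ℕ, A ≠ B ∧
        (A.length = n ∧ SeqFactor A X ∧ LocallyHeavyWord A) ∧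
        (B.length = n ∧ SeqFactor B X ∧ LocallyHeavyWord B) ∧
        ∀ C : List ℕ, (C.length = n ∧ SeqFactor C X ∧ LocallyHeavyWord C) → C = A ∨ C = B := by
  have hjN : X (j + N) = 0 := by
    rcases hX (j + N) with h | h
    · exact h
    · exfalso
      have hall : ∀ i, i < N + 1 → X (j + i) = 1 := by
        intro i hi
        rcases Nat.lt_or_ge i N with h' | h'
        · exact hj i h'
        · have : i = N := by omega
          rw [this]; exact h
      have := hN2 (N + 1) (Or.inl (factor_replicate hall))
      omega
  have hA1 : ∀ i, i < n → X (j + (N - n) + i) = 1 := by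
    intro i hi
    have e : j + (N - n) + i = j + ((N - n) + i) := by omega
    rw [e]; exact hj _ (by omega)
  have hB1 : ∀ i, i < n - 1 → X (j + (N + 1 - n) + i) = 1 := by
    intro i hi
    have e : j + (N + 1 - n) + i = j + ((N + 1 - n) + i) := by omega
    rw [e]; exact hj _ (by omega)
  have hBlast : X (j + (N + 1 - n) + (n - 1)) = 0 := by
    have e : j + (N + 1 - n) + (n - 1) = j + N := by omega
    rw [e]; exact hjN
  have hsa : ∀ m, m ≤ n → sg X (j + (N - n)) m = m :=
    fun m hm => sg_of_ones (fun i hi => hA1 i (by omega))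
  have hsb : ∀ m, m ≤ n - 1 → sg X (j + (N + 1 - n)) m = m :=
    fun m hm => sg_of_ones (fun i hi => hB1 i (by omega))
  have hsbn : sg X (j + (N + 1 - n)) n = n - 1 := by
    have e := sg_succ X (j + (N + 1 - n)) (n - 1)
    rw [show n - 1 + 1 = n from by omega] at e
    rw [e, hsb (n - 1) le_rfl, hBlast]
    omega
  have lhA : LocallyHeavyWord (win X (j + (N - n)) n) := by
    rw [LH_iff]
    intro i hi1 hi2
    rw [hsa n le_rfl, hsa i hi2, Nat.mul_comm]
  have lhB : LocallyHeavyWord (win X (j + (N + 1 - n)) n) := by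
    rw [LH_iff]
    intro i hi1 hi2
    rw [hsbn]
    rcases Nat.lt_or_ge i n with h' | h'
    · rw [hsb i (by omega)]
      calc (n - 1) * i ≤ n * i := Nat.mul_le_mul_right i (by omega)
      _ = i * n := Nat.mul_comm n i
    · have : i = n := by omega
      rw [this, hsbn]
  refine ⟨win X (j + (N - n)) n, win X (j + (N + 1 - n)) n, ?_,
    ⟨by simp, factor_win _ _ _, lhA⟩, ⟨by simp, factor_win _ _ _, lhB⟩, ?_⟩
  · intro h
    have := congrArg List.sum h
    rw [sum_win, sum_win, hsa n le_rfl, hsbn] at this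
    omega
  · rintro C ⟨hlC, hfC, lhC⟩
    obtain ⟨c, hC⟩ := factor_to_win hfC hlC
    rw [hC] at lhC ⊢
    have hcl := sg_le X hX c n
    have hbA := bal hSturm (j + (N - n)) c n
    rw [hsa n le_rfl] at hbA
    rcases (show sg X c n = n ∨ sg X c n = n - 1 from by omega) with h | h
    · left
      rw [win_eq_replicate (entries_one hX h), win_eq_replicate hA1]
    · right
      exact LH_unique hSturm (by omega) lhC lhB (by rw [h, hsbn])

include hSturm in
lemma part_one_zeros (hX : ∀ i, X i = 0 ∨ X i = 1) {N : ℕ}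
    (hN2 : ∀ n : ℕ, (SeqFactor (List.replicate n 1) X ∨ SeqFactor (List.replicate n 0) X) → n ≤ N)
    {j : ℕ} (hj : ∀ i, i < N → X (j + i) = 0) {n : ℕ} (h1 : 1 ≤ n) (h2 : n ≤ N) :
    ∃ A B : List ℕ, A ≠ B ∧
        (A.length = n ∧ SeqFactor A X ∧ LocallyHeavyWord A) ∧
        (B.length = n ∧ SeqFactor B X ∧ LocallyHeavyWord B) ∧
        ∀ C : List ℕ, (C.length = n ∧ SeqFactor C X ∧ LocallyHeavyWord C) → C = A ∨ C = B := by
  classical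
  have hsj : sg X j N = 0 := sg_of_zeros hj
  -- there are ones arbitrarily far out
  have hinf : ∀ M : ℕ, ∃ p, M ≤ p ∧ X p = 1 := by
    intro M
    by_contra hcon
    push_neg at hcon
    have hall : ∀ i, i < N + 1 → X (M + i) = 0 := by
      intro i hi
      rcases hX (M + i) with h | h
      · exact h
      · exact absurd h (hcon (M + i) (by omega))
    have := hN2 (N + 1) (Or.inr (factor_replicate hall))
    omega
  obtain ⟨p, -, hp1⟩ := hinf 0
  obtain ⟨q, ⟨hpq, hq1⟩, hqmin⟩ :
      ∃ q, (p < q ∧ X q = 1) ∧ ∀ r, r < q → ¬ (p < r ∧ X r = 1) := by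
    obtain ⟨q', hq'⟩ := hinf (p + 1)
    have hQ : ∃ q, p < q ∧ X q = 1 := ⟨q', by omega, hq'.2⟩
    exact ⟨Nat.find hQ, Nat.find_spec hQ, fun r hr => Nat.find_min hQ hr⟩
  have hzero : ∀ k, p < k → k < q → X k = 0 := by
    intro k hk1 hk2
    rcases hX k with h | h
    · exact h
    · exact absurd ⟨hk1, h⟩ (hqmin k hk2)
  -- the gap between the ones at p and q is at least N
  have hgap : p + N ≤ q := by
    by_contra hcon
    have hsum2 : 2 ≤ sg X p N := by
      have hsub : ({0, q - p} : Finset ℕ) ⊆ Finset.range N := by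
        intro x hx
        simp only [Finset.mem_insert, Finset.mem_singleton] at hx
        rcases hx with rfl | rfl <;> simp [Finset.mem_range] <;> omega
      have hle : ∑ i ∈ ({0, q - p} : Finset ℕ), X (p + i) ≤ sg X p N :=
        Finset.sum_le_sum_of_subset hsub
      rw [Finset.sum_pair (by omega : (0:ℕ) ≠ q - p)] at hle
      rw [Nat.add_zero, show p + (q - p) = q from by omega] at hle
      omega
    have := bal hSturm p j N
    omega
  -- entries of the first candidate 1 0^(n-1)
  have hA1 : ∀ i, i < n → X (p + i) = (if i = 0 then 1 else 0) := by
    intro i hi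
    rcases Nat.eq_zero_or_pos i with rfl | hi0
    · simpa using hp1
    · simp only [if_neg (by omega : ¬ i = 0)]
      exact hzero (p + i) (by omega) (by omega)
  have hsa : ∀ m, 1 ≤ m → m ≤ n → sg X p m = 1 := by
    intro m hm1 hm2
    have e := sg_add X p 1 (m - 1)
    rw [show 1 + (m - 1) = m from by omega] at e
    have hz : sg X (p + 1) (m - 1) = 0 := by
      apply sg_of_zeros
      intro i hi
      have : p + 1 + i = p + (1 + i) := by omega
      rw [this]
      have := hA1 (1 + i) (by omega)
      simpa using this
    rw [e, hz, sg_one]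
    simpa using hp1
  have hsb : ∀ m, m ≤ n → sg X j m = 0 :=
    fun m hm => sg_of_zeros (fun i hi => hj i (by omega))
  have lhA : LocallyHeavyWord (win X p n) := by
    rw [LH_iff]
    intro i hi1 hi2
    rw [hsa n h1 le_rfl, hsa i hi1 hi2, Nat.one_mul, Nat.one_mul]
    omega
  have lhB : LocallyHeavyWord (win X j n) := by
    rw [LH_iff]
    intro i hi1 hi2
    rw [hsb n le_rfl, hsb i hi2]
    simp
  refine ⟨win X p n, win X j n, ?_,
    ⟨by simp, factor_win _ _ _, lhA⟩, ⟨by simp, factor_win _ _ _, lhB⟩, ?_⟩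
  · intro h
    have := congrArg List.sum h
    rw [sum_win, sum_win, hsa n h1 le_rfl, hsb n le_rfl] at this
    omega
  · rintro C ⟨hlC, hfC, lhC⟩
    obtain ⟨c, hC⟩ := factor_to_win hfC hlC
    rw [hC] at lhC ⊢
    have hbB := bal hSturm c j n
    rw [hsb n le_rfl] at hbB
    rcases (show sg X c n = 1 ∨ sg X c n = 0 from by omega) with h | h
    · left
      exact LH_unique hSturm (by omega) lhC lhA (by rw [h, hsa n h1 le_rfl])
    · right
      rw [win_eq_replicate (entries_zero h), win_eq_replicate (fun i hi => hj i (by omega))]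

include hSturm in
lemma part_two (hX : ∀ i, X i = 0 ∨ X i = 1) {N : ℕ} (hN1 : 1 ≤ N)
    (hN2 : ∀ n : ℕ, (SeqFactor (List.replicate n 1) X ∨ SeqFactor (List.replicate n 0) X) → n ≤ N) :
    ∀ n : ℕ, N < n → ∀ A B : List ℕ,
        (A.length = n ∧ SeqFactor A X ∧ LocallyHeavyWord A) →
        (B.length = n ∧ SeqFactor B X ∧ LocallyHeavyWord B) → A = B := by
  rintro n hn A B ⟨hlA, hfA, lhA⟩ ⟨hlB, hfB, lhB⟩
  obtain ⟨a, hA⟩ := factor_to_win hfA hlA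
  obtain ⟨b, hB⟩ := factor_to_win hfB hlB
  rw [hA] at lhA ⊢
  rw [hB] at lhB ⊢
  have h1 := bal hSturm a b n
  have h2 := bal hSturm b a n
  rcases Nat.lt_trichotomy (sg X a n) (sg X b n) with h | h | h
  · exact absurd (show sg X b n = sg X a n + 1 from by omega)
      (fun he => no_diff_sums hSturm hX hN2 hn (by omega) lhB lhA he)
  · exact LH_unique hSturm (by omega) lhA lhB h
  · exact absurd (show sg X a n = sg X b n + 1 from by omega)
      (fun he => no_diff_sums hSturm hX hN2 hn (by omega) lhA lhB he)

end
end StHelper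

/-- Let `X` be a binary Sturmian sequence containing at least two ones and
two zeroes, and let `N` be the largest `n` such that `1^n` or `0^n` is a factor of `X`. Then
`X` has exactly two distinct locally heavy factors of each length `1 ≤ n ≤ N`, and at most one
locally heavy factor of each length `n > N`. -/
theorem sturmian_two_heavy_then_one
    (X : ℕ → ℕ) (hX : ∀ i, X i = 0 ∨ X i = 1)
    (hSturm : ∀ A B : List ℕ, SeqFactor A X → SeqFactor B X → A.length = B.length →
      |(A.sum : ℤ) - (B.sum : ℤ)| ≤ 1)
    (h1 : ∃ i j : ℕ, i ≠ j ∧ X i = 1 ∧ X j = 1)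
    (h0 : ∃ i j : ℕ, i ≠ j ∧ X i = 0 ∧ X j = 0)
    (N : ℕ)
    (hN : (SeqFactor (List.replicate N 1) X ∨ SeqFactor (List.replicate N 0) X) ∧
      ∀ n : ℕ, (SeqFactor (List.replicate n 1) X ∨ SeqFactor (List.replicate n 0) X) → n ≤ N) :
    (∀ n : ℕ, 1 ≤ n → n ≤ N → ∃ A B : List ℕ, A ≠ B ∧
        (A.length = n ∧ SeqFactor A X ∧ LocallyHeavyWord A) ∧
        (B.length = n ∧ SeqFactor B X ∧ LocallyHeavyWord B) ∧
        ∀ C : List ℕ, (C.length = n ∧ SeqFactor C X ∧ LocallyHeavyWord C) → C = A ∨ C = B) ∧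
    (∀ n : ℕ, N < n → ∀ A B : List ℕ,
        (A.length = n ∧ SeqFactor A X ∧ LocallyHeavyWord A) →
        (B.length = n ∧ SeqFactor B X ∧ LocallyHeavyWord B) → A = B) := by
  obtain ⟨i₁, -, -, hi₁, -⟩ := h1
  have hN1 : 1 ≤ N := by
    apply hN.2 1
    left
    apply StHelper.factor_replicate (j := i₁)
    intro k hk
    have : k = 0 := by omega
    rw [this, Nat.add_zero]
    exact hi₁
  constructor
  · intro n hn1 hnN
    rcases hN.1 with hc | hc
    · obtain ⟨j, hj⟩ := StHelper.factor_replicate_ex hc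
      exact StHelper.part_one_ones hSturm hX hN.2 hj hn1 hnN
    · obtain ⟨j, hj⟩ := StHelper.factor_replicate_ex hc
      exact StHelper.part_one_zeros hSturm hX hN.2 hj hn1 hnN
  · exact StHelper.part_two hSturm hX hN1 hN.2
end
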